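/- arXiv:1804.04319 — 4 statements merged into one kernel-verified Lean document; each statement's English description precedes it below -/
import Mathlib

section
/- Let m, t, r be natural numbers. Let v' be a positive definite symmetric real m×m matrix, v₂ a symmetric real t×t matrix, T a symmetric real r×r matrix, y'₁ a real m×t matrix, y'₂ a real m×r matrix, y₂ a real t×r matrix, N₂ a symmetric real t×t matrix, R₂ a real t×r matrix, and M a symmetric real r×r matrix. Set Δ := v₂ - y'₁ᵀ v'⁻¹ y'₁ and η := y₂ - y'₁ᵀ v'⁻¹ y'₂, and assume Δ is invertible and that the (m+t)×(m+t) block matrix v := [[v', y'₁],[y'₁ᵀ, v₂]] is invertible. Set N := [[N₂, (1/2)R₂],[(1/2)R₂ᵀ, M]], T' := [[v₂, y₂],[y₂ᵀ, T]], let y' := [y'₁ | y'₂] be the m×(t+r) matrix obtained by juxtaposing y'₁ and y'₂, and let y be the (m+t)×r matrix obtained by stacking y'₂ on top of y₂. Then Tr(N·(T' - y'ᵀ v'⁻¹ y')) - Tr(M·(T - yᵀ v⁻¹ y)) = Tr(N · [[Δ, η],[ηᵀ, ηᵀΔ⁻¹η]]). -/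
open Matrix

lemma my_trace_fromBlocks {a b : Type*} [Fintype a] [Fintype b]
    (A : Matrix a a ℝ) (B : Matrix a b ℝ) (C : Matrix b a ℝ) (D : Matrix b b ℝ) :
    trace (fromBlocks A B C D) = trace A + trace D := by
  simp [Matrix.trace, Fintype.sum_sum_type, fromBlocks, Matrix.diag]

lemma my_fromBlocks_sub {a b a' b' : Type*}
    (A : Matrix a a' ℝ) (B : Matrix a b' ℝ) (C : Matrix b a' ℝ) (D : Matrix b b' ℝ)
    (A' : Matrix a a' ℝ) (B' : Matrix a b' ℝ) (C' : Matrix b a' ℝ) (D' : Matrix b b' ℝ) :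
    fromBlocks A B C D - fromBlocks A' B' C' D' =
      fromBlocks (A - A') (B - B') (C - C') (D - D') := by
  ext (i | i) (j | j) <;> simp [fromBlocks]

set_option maxHeartbeats 1000000 in
/-- the key trace identity in the proof of Lemma 2.1:
`Tr(N·(T' - y'ᵀ v'⁻¹ y')) - Tr(M·(T - yᵀ v⁻¹ y)) = Tr(N · [[Δ, η],[ηᵀ, ηᵀΔ⁻¹η]])`
where `Δ = v₂ - y'₁ᵀ v'⁻¹ y'₁` and `η = y₂ - y'₁ᵀ v'⁻¹ y'₂`. -/
theorem trace_identity_fourierJacobi {m t r : ℕ}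
    (v' : Matrix (Fin m) (Fin m) ℝ) (v₂ : Matrix (Fin t) (Fin t) ℝ)
    (T : Matrix (Fin r) (Fin r) ℝ) (y'₁ : Matrix (Fin m) (Fin t) ℝ)
    (y'₂ : Matrix (Fin m) (Fin r) ℝ) (y₂ : Matrix (Fin t) (Fin r) ℝ)
    (N₂ : Matrix (Fin t) (Fin t) ℝ) (R₂ : Matrix (Fin t) (Fin r) ℝ)
    (M : Matrix (Fin r) (Fin r) ℝ)
    (hv' : v'.PosDef) (hv₂ : v₂.IsSymm) (hT : T.IsSymm) (hN₂ : N₂.IsSymm) (hM : M.IsSymm)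
    (hΔ : IsUnit (v₂ - y'₁ᵀ * v'⁻¹ * y'₁).det)
    (hv : IsUnit (fromBlocks v' y'₁ y'₁ᵀ v₂).det) :
    trace (fromBlocks N₂ ((1/2 : ℝ) • R₂) ((1/2 : ℝ) • R₂ᵀ) M *
        (fromBlocks v₂ y₂ y₂ᵀ T - (fromCols y'₁ y'₂)ᵀ * v'⁻¹ * fromCols y'₁ y'₂)) -
      trace (M * (T - (fromRows y'₂ y₂)ᵀ * (fromBlocks v' y'₁ y'₁ᵀ v₂)⁻¹ * fromRows y'₂ y₂)) =
    trace (fromBlocks N₂ ((1/2 : ℝ) • R₂) ((1/2 : ℝ) • R₂ᵀ) M *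
      fromBlocks (v₂ - y'₁ᵀ * v'⁻¹ * y'₁) (y₂ - y'₁ᵀ * v'⁻¹ * y'₂)
        (y₂ - y'₁ᵀ * v'⁻¹ * y'₂)ᵀ
        ((y₂ - y'₁ᵀ * v'⁻¹ * y'₂)ᵀ * (v₂ - y'₁ᵀ * v'⁻¹ * y'₁)⁻¹ *
          (y₂ - y'₁ᵀ * v'⁻¹ * y'₂))) := by
  have hv'd : IsUnit v'.det := isUnit_iff_ne_zero.mpr hv'.det_pos.ne'
  have hv's : v'ᵀ = v' := by simpa using hv'.1.eq
  have hA : v'⁻¹ᵀ = v'⁻¹ := by rw [transpose_nonsing_inv, hv's]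
  set A := v'⁻¹ with hAdef
  set Δ := v₂ - y'₁ᵀ * A * y'₁ with hΔdef
  set η := y₂ - y'₁ᵀ * A * y'₂ with hηdef
  have hv'A : v' * A = 1 := mul_nonsing_inv v' hv'd
  have hΔu : Δ * Δ⁻¹ = 1 := mul_nonsing_inv Δ hΔ
  have hv₂Δ : v₂ * Δ⁻¹ = 1 + y'₁ᵀ * A * y'₁ * Δ⁻¹ := by
    have h : Δ + y'₁ᵀ * A * y'₁ = v₂ := sub_add_cancel _ _
    rw [← h, add_mul, hΔu]
  have hηT : ηᵀ = y₂ᵀ - y'₂ᵀ * A * y'₁ := by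
    rw [hηdef, transpose_sub, transpose_mul, transpose_mul, hA, transpose_transpose, Matrix.mul_assoc]
  -- inverse of the block matrix
  have hinv : (fromBlocks v' y'₁ y'₁ᵀ v₂)⁻¹ =
      fromBlocks (A + A * y'₁ * Δ⁻¹ * y'₁ᵀ * A) (-(A * y'₁ * Δ⁻¹))
        (-(Δ⁻¹ * y'₁ᵀ * A)) Δ⁻¹ := by
    apply inv_eq_right_inv
    have e11 : v' * (A + A * y'₁ * Δ⁻¹ * y'₁ᵀ * A) + y'₁ * -(Δ⁻¹ * y'₁ᵀ * A) = 1 := by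
      simp only [Matrix.mul_add, Matrix.mul_neg, ← Matrix.mul_assoc, hv'A, Matrix.one_mul]
      abel
    have e12 : v' * -(A * y'₁ * Δ⁻¹) + y'₁ * Δ⁻¹ = 0 := by
      simp only [Matrix.mul_neg, ← Matrix.mul_assoc, hv'A, Matrix.one_mul]
      abel
    have e21 : y'₁ᵀ * (A + A * y'₁ * Δ⁻¹ * y'₁ᵀ * A) + v₂ * -(Δ⁻¹ * y'₁ᵀ * A) = 0 := by
      simp only [Matrix.mul_add, Matrix.mul_neg, ← Matrix.mul_assoc]
      rw [hv₂Δ]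
      simp only [Matrix.add_mul, Matrix.one_mul]
      abel
    have e22 : y'₁ᵀ * -(A * y'₁ * Δ⁻¹) + v₂ * Δ⁻¹ = 1 := by
      simp only [Matrix.mul_neg, ← Matrix.mul_assoc]
      rw [hv₂Δ]
      abel
    rw [fromBlocks_multiply, e11, e12, e21, e22, fromBlocks_one]
  -- first product of rectangular matrices
  have h1 : (fromCols y'₁ y'₂)ᵀ * A * fromCols y'₁ y'₂ =
      fromBlocks (y'₁ᵀ * A * y'₁) (y'₁ᵀ * A * y'₂) (y'₂ᵀ * A * y'₁) (y'₂ᵀ * A * y'₂) := by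
    rw [transpose_fromCols, fromRows_mul, fromRows_mul_fromCols]
  have h2 : (fromRows y'₂ y₂)ᵀ * (fromBlocks v' y'₁ y'₁ᵀ v₂)⁻¹ * fromRows y'₂ y₂ =
      y'₂ᵀ * A * y'₂ + ηᵀ * Δ⁻¹ * η := by
    rw [hinv, transpose_fromRows, fromCols_mul_fromBlocks,
      fromCols_mul_fromRows, hηT, hηdef]
    simp only [Matrix.sub_mul, Matrix.mul_sub, Matrix.add_mul, Matrix.mul_add,
      Matrix.neg_mul, Matrix.mul_neg, Matrix.mul_assoc]
    abel
  rw [h1, h2, my_fromBlocks_sub, hηT.symm, fromBlocks_multiply, fromBlocks_multiply,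
    my_trace_fromBlocks, my_trace_fromBlocks]
  have hTsub : T - (y'₂ᵀ * A * y'₂ + ηᵀ * Δ⁻¹ * η) = (T - y'₂ᵀ * A * y'₂) - ηᵀ * Δ⁻¹ * η := by
    abel
  rw [hTsub, ← hηdef]
  simp only [hΔdef, Matrix.mul_sub, Matrix.mul_add, trace_sub, trace_add]
  ring
end

section
/- Let M ∈ L_r^+ and let N₁ = [[N₂₁, (1/2)R₂₁],[(1/2)R₂₁ᵀ, M]] and N₂ = [[N₂₂, (1/2)R₂₂],[(1/2)R₂₂ᵀ, M]] be two elements of L_{t,r}^+(M). Suppose that 4N₂₁ - R₂₁M⁻¹R₂₁ᵀ = 4N₂₂ - R₂₂M⁻¹R₂₂ᵀ and that R₂₂ - R₂₁ = X·(2M) for some integer t×r matrix X. Then, with γ := [[1_t, X],[0, 1_r]] ∈ B_{t,r}(ℤ), one has γ·N₁·γᵀ = N₂; in particular N₁ and N₂ lie in the same B_{t,r}(ℤ)-orbit. -/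
open Matrix

/-- A real matrix has integer entries. -/
def IsIntegerMatrix {ι κ : Type*} (A : Matrix ι κ ℝ) : Prop :=
  ∀ i j, ∃ z : ℤ, A i j = z

/-- A real square matrix is half-integral: integer diagonal and its double integral. -/
def IsHalfIntegral {ι : Type*} (A : Matrix ι ι ℝ) : Prop :=
  (∀ i, ∃ z : ℤ, A i i = z) ∧ ∀ i j, ∃ z : ℤ, 2 * A i j = z

/-- Membership in `L_t^+`: positive definite half-integral symmetric real matrices. -/
def LPlus {ι : Type*} [Fintype ι] (A : Matrix ι ι ℝ) : Prop :=
  A.IsSymm ∧ A.PosDef ∧ IsHalfIntegral A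

/-- Membership in `L_{t,r}^+(M)`: positive definite half-integral matrices of the
block form `[[N₂, (1/2)R₂],[(1/2)R₂ᵀ, M]]` with `N₂ ∈ L_t^+` and `R₂` integral. -/
def LtrPlus (t r : ℕ) (M : Matrix (Fin r) (Fin r) ℝ) :
    Set (Matrix (Fin t ⊕ Fin r) (Fin t ⊕ Fin r) ℝ) :=
  {N | ∃ N₂ : Matrix (Fin t) (Fin t) ℝ, ∃ R₂ : Matrix (Fin t) (Fin r) ℝ,
    LPlus N₂ ∧ IsIntegerMatrix R₂ ∧
    N = Matrix.fromBlocks N₂ ((1/2 : ℝ) • R₂) ((1/2 : ℝ) • R₂ᵀ) M ∧ LPlus N}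

/-- Membership in `B_{t,r}(ℤ)` (viewed inside real matrices): `γ = [[γ₁,γ₂],[0,1]]`
with `γ₁ ∈ GL_t(ℤ)` and `γ₂` an integer matrix. -/
def InBtr (t r : ℕ) (γ : Matrix (Fin t ⊕ Fin r) (Fin t ⊕ Fin r) ℝ) : Prop :=
  ∃ γ₁ : Matrix (Fin t) (Fin t) ℝ, ∃ γ₂ : Matrix (Fin t) (Fin r) ℝ,
    IsIntegerMatrix γ₁ ∧ (γ₁.det = 1 ∨ γ₁.det = -1) ∧ IsIntegerMatrix γ₂ ∧
    γ = Matrix.fromBlocks γ₁ γ₂ (0 : Matrix (Fin r) (Fin t) ℝ) (1 : Matrix (Fin r) (Fin r) ℝ)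

/-- two elements of `L_{t,r}^+(M)` with the same Schur invariant and
congruent right columns lie in the same `B_{t,r}(ℤ)`-orbit, via `γ = [[1,X],[0,1]]`. -/
theorem same_orbit_of_same_invariant {t r : ℕ}
    (M : Matrix (Fin r) (Fin r) ℝ) (hM : LPlus M)
    (N₂₁ N₂₂ : Matrix (Fin t) (Fin t) ℝ) (R₂₁ R₂₂ : Matrix (Fin t) (Fin r) ℝ)
    (h1 : fromBlocks N₂₁ ((1/2 : ℝ) • R₂₁) ((1/2 : ℝ) • R₂₁ᵀ) M ∈ LtrPlus t r M)
    (h2 : fromBlocks N₂₂ ((1/2 : ℝ) • R₂₂) ((1/2 : ℝ) • R₂₂ᵀ) M ∈ LtrPlus t r M)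
    (hN21 : LPlus N₂₁) (hN22 : LPlus N₂₂)
    (hR21 : IsIntegerMatrix R₂₁) (hR22 : IsIntegerMatrix R₂₂)
    (hschur : (4 : ℝ) • N₂₁ - R₂₁ * M⁻¹ * R₂₁ᵀ = (4 : ℝ) • N₂₂ - R₂₂ * M⁻¹ * R₂₂ᵀ)
    (X : Matrix (Fin t) (Fin r) ℝ) (hX : IsIntegerMatrix X)
    (hXR : R₂₂ - R₂₁ = X * ((2 : ℝ) • M)) :
    InBtr t r (fromBlocks (1 : Matrix (Fin t) (Fin t) ℝ) X
        (0 : Matrix (Fin r) (Fin t) ℝ) (1 : Matrix (Fin r) (Fin r) ℝ)) ∧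
    fromBlocks (1 : Matrix (Fin t) (Fin t) ℝ) X
          (0 : Matrix (Fin r) (Fin t) ℝ) (1 : Matrix (Fin r) (Fin r) ℝ) *
        fromBlocks N₂₁ ((1/2 : ℝ) • R₂₁) ((1/2 : ℝ) • R₂₁ᵀ) M *
        (fromBlocks (1 : Matrix (Fin t) (Fin t) ℝ) X
          (0 : Matrix (Fin r) (Fin t) ℝ) (1 : Matrix (Fin r) (Fin r) ℝ))ᵀ =
      fromBlocks N₂₂ ((1/2 : ℝ) • R₂₂) ((1/2 : ℝ) • R₂₂ᵀ) M := by
  have hMs : Mᵀ = M := hM.1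
  have hMdet : IsUnit M.det := isUnit_iff_ne_zero.2 hM.2.1.det_pos.ne'
  have hR : R₂₂ = R₂₁ + (2 : ℝ) • (X * M) := by
    have h := hXR
    rw [Matrix.mul_smul] at h
    linear_combination (norm := module) h
  have hRT : R₂₂ᵀ = R₂₁ᵀ + (2 : ℝ) • (M * Xᵀ) := by
    rw [hR]; simp [Matrix.transpose_add, Matrix.transpose_smul, Matrix.transpose_mul, hMs]
  have e1 : R₂₁ * M⁻¹ * ((2 : ℝ) • (M * Xᵀ)) = (2 : ℝ) • (R₂₁ * Xᵀ) := by
    rw [Matrix.mul_smul, ← Matrix.mul_assoc, Matrix.nonsing_inv_mul_cancel_right _ _ hMdet]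
  have e2 : ((2 : ℝ) • (X * M)) * M⁻¹ * R₂₁ᵀ = (2 : ℝ) • (X * R₂₁ᵀ) := by
    rw [Matrix.smul_mul, Matrix.mul_nonsing_inv_cancel_right _ _ hMdet, Matrix.smul_mul]
  have e3 : ((2 : ℝ) • (X * M)) * M⁻¹ * ((2 : ℝ) • (M * Xᵀ)) = (4 : ℝ) • (X * M * Xᵀ) := by
    rw [Matrix.smul_mul, Matrix.mul_nonsing_inv_cancel_right _ _ hMdet, Matrix.smul_mul,
      Matrix.mul_smul, smul_smul, Matrix.mul_assoc, ← Matrix.mul_assoc]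
    norm_num
  have hexp : R₂₂ * M⁻¹ * R₂₂ᵀ
      = R₂₁ * M⁻¹ * R₂₁ᵀ + (2 : ℝ) • (R₂₁ * Xᵀ) + (2 : ℝ) • (X * R₂₁ᵀ)
        + (4 : ℝ) • (X * M * Xᵀ) := by
    rw [hRT, hR]
    simp only [Matrix.add_mul, Matrix.mul_add]
    linear_combination (norm := module) e1 + e2 + e3
  have hN2 : N₂₂ = N₂₁ + (1/2 : ℝ) • (X * R₂₁ᵀ) + (1/2 : ℝ) • (R₂₁ * Xᵀ)
      + X * M * Xᵀ := by
    have h := hschur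
    rw [hexp] at h
    linear_combination (norm := module) (-(1/4 : ℝ)) • h
  constructor
  · refine ⟨1, X, ?_, Or.inl Matrix.det_one, hX, rfl⟩
    intro i j
    by_cases h : i = j
    · exact ⟨1, by simp [h, Matrix.one_apply]⟩
    · exact ⟨0, by simp [Matrix.one_apply, h]⟩
  · simp only [Matrix.fromBlocks_transpose, Matrix.fromBlocks_multiply, Matrix.transpose_one,
      Matrix.transpose_zero, Matrix.one_mul, Matrix.mul_one, Matrix.zero_mul, Matrix.mul_zero,
      add_zero, zero_add]
    have hB : (1/2 : ℝ) • R₂₁ + X * M = (1/2 : ℝ) • R₂₂ := by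
      rw [hR]
      linear_combination (norm := module) (0 : Matrix (Fin t) (Fin r) ℝ) = 0
    have hC : (1/2 : ℝ) • R₂₁ᵀ + M * Xᵀ = (1/2 : ℝ) • R₂₂ᵀ := by
      rw [hRT]
      linear_combination (norm := module) (0 : Matrix (Fin r) (Fin t) ℝ) = 0
    have hA : N₂₁ + X * ((1/2 : ℝ) • R₂₁ᵀ) + ((1/2 : ℝ) • R₂₁ + X * M) * Xᵀ = N₂₂ := by
      rw [hN2, Matrix.mul_smul, Matrix.add_mul, Matrix.smul_mul]
      linear_combination (norm := module) (0 : Matrix (Fin t) (Fin t) ℝ) = 0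
    rw [hA, hB, hC]
end

section
/- Let r ≥ 2 and t ≥ 1. Let M₁ be a symmetric real (r-1)×(r-1) matrix, L a real (r-1)×1 matrix, and set M := [[M₁, (1/2)L],[(1/2)Lᵀ, 1]] (an r×r matrix) and 𝔐 := 4M₁ - LLᵀ; assume M and 𝔐 are invertible. Let N₂ be a symmetric real t×t matrix, R₂₁ a real t×(r-1) matrix, R₂₂ a real t×1 matrix, and R₂ := [R₂₁ | R₂₂] the t×r matrix obtained by juxtaposition. Set N₂' := 4N₂ - R₂₂R₂₂ᵀ and R₂' := 4R₂₁ - 2R₂₂Lᵀ. Then 4N₂' - R₂'𝔐⁻¹R₂'ᵀ = 4·(4N₂ - R₂M⁻¹R₂ᵀ). -/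
open Matrix

/-- the Schur-complement identity relating index `M = [[M₁,(1/2)L],[(1/2)Lᵀ,1]]`
to the index `𝔐 = 4M₁ - LLᵀ`:
`4N₂' - R₂'𝔐⁻¹R₂'ᵀ = 4·(4N₂ - R₂M⁻¹R₂ᵀ)` where `N₂' = 4N₂ - R₂₂R₂₂ᵀ` and
`R₂' = 4R₂₁ - 2R₂₂Lᵀ`, `R₂ = [R₂₁ | R₂₂]`. -/
theorem schur_invariant_half_integral_correspondence {t r : ℕ} (hr : 2 ≤ r) (ht : 1 ≤ t)
    (M₁ : Matrix (Fin (r-1)) (Fin (r-1)) ℝ) (hM₁ : M₁.IsSymm)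
    (L : Matrix (Fin (r-1)) (Fin 1) ℝ)
    (N₂ : Matrix (Fin t) (Fin t) ℝ) (hN₂ : N₂.IsSymm)
    (R₂₁ : Matrix (Fin t) (Fin (r-1)) ℝ) (R₂₂ : Matrix (Fin t) (Fin 1) ℝ)
    (hMdet : IsUnit (fromBlocks M₁ ((1/2 : ℝ) • L) ((1/2 : ℝ) • Lᵀ)
      (1 : Matrix (Fin 1) (Fin 1) ℝ)).det)
    (h𝔐det : IsUnit ((4 : ℝ) • M₁ - L * Lᵀ).det) :
    (4 : ℝ) • ((4 : ℝ) • N₂ - R₂₂ * R₂₂ᵀ) -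
        ((4 : ℝ) • R₂₁ - (2 : ℝ) • (R₂₂ * Lᵀ)) * ((4 : ℝ) • M₁ - L * Lᵀ)⁻¹ *
          ((4 : ℝ) • R₂₁ - (2 : ℝ) • (R₂₂ * Lᵀ))ᵀ =
      (4 : ℝ) • ((4 : ℝ) • N₂ -
        fromCols R₂₁ R₂₂ *
          (fromBlocks M₁ ((1/2 : ℝ) • L) ((1/2 : ℝ) • Lᵀ) (1 : Matrix (Fin 1) (Fin 1) ℝ))⁻¹ *
          (fromCols R₂₁ R₂₂)ᵀ) := by
  haveI : Invertible (1 : Matrix (Fin 1) (Fin 1) ℝ) := invertibleOne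
  set 𝔐 : Matrix (Fin (r-1)) (Fin (r-1)) ℝ := (4 : ℝ) • M₁ - L * Lᵀ with h𝔐
  set B : Matrix (Fin (r-1)) (Fin 1) ℝ := (1/2 : ℝ) • L with hB
  set C : Matrix (Fin 1) (Fin (r-1)) ℝ := (1/2 : ℝ) • Lᵀ with hC
  -- Schur complement of the bottom-right block
  have hS : M₁ - B * (⅟(1 : Matrix (Fin 1) (Fin 1) ℝ)) * C = (4 : ℝ)⁻¹ • 𝔐 := by
    rw [invOf_one, Matrix.mul_one, hB, hC, h𝔐, Matrix.smul_mul, Matrix.mul_smul, smul_smul,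
      smul_sub, smul_smul]
    norm_num
  have hSdet : IsUnit (M₁ - B * (⅟(1 : Matrix (Fin 1) (Fin 1) ℝ)) * C).det := by
    rw [hS, det_smul]
    exact ((isUnit_iff_ne_zero.mpr (by norm_num : (4:ℝ)⁻¹ ≠ 0)).pow _).mul h𝔐det
  haveI : Invertible (M₁ - B * (⅟(1 : Matrix (Fin 1) (Fin 1) ℝ)) * C) :=
    Matrix.invertibleOfIsUnitDet _ hSdet
  haveI : Invertible (fromBlocks M₁ B C (1 : Matrix (Fin 1) (Fin 1) ℝ)) :=
    fromBlocks₂₂Invertible _ _ _ _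
  have hSinv : (M₁ - B * (⅟(1 : Matrix (Fin 1) (Fin 1) ℝ)) * C)⁻¹ = (4 : ℝ) • 𝔐⁻¹ := by
    apply inv_eq_right_inv
    rw [hS, Matrix.smul_mul, Matrix.mul_smul, smul_smul, Matrix.mul_nonsing_inv _ h𝔐det]
    norm_num
  have hMinv : (fromBlocks M₁ B C (1 : Matrix (Fin 1) (Fin 1) ℝ))⁻¹ =
      fromBlocks ((4 : ℝ) • 𝔐⁻¹) (-((4 : ℝ) • 𝔐⁻¹ * B)) (-(C * ((4 : ℝ) • 𝔐⁻¹)))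
        (1 + C * ((4 : ℝ) • 𝔐⁻¹) * B) := by
    rw [← invOf_eq_nonsing_inv, invOf_fromBlocks₂₂_eq, invOf_eq_nonsing_inv, hSinv, invOf_one,
      Matrix.mul_one, Matrix.one_mul]
    simp [Matrix.mul_one]
  rw [hMinv, transpose_fromCols, fromCols_mul_fromBlocks, fromCols_mul_fromRows]
  -- now pure (noncommutative) ring + smul algebra
  rw [hB, hC]
  simp only [Matrix.mul_smul, Matrix.smul_mul, Matrix.mul_neg, Matrix.neg_mul, Matrix.mul_add,
    Matrix.add_mul, Matrix.sub_mul, Matrix.mul_sub, smul_smul, Matrix.mul_one, Matrix.one_mul,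
    transpose_smul, Matrix.transpose_sub, Matrix.transpose_mul, smul_sub, smul_add, smul_neg, Matrix.mul_assoc, Matrix.transpose_transpose]
  module
end

section
/- Let t, r ≥ 0 with t ≥ 1 and let M ∈ L_r^+. There exists a real number s₀ such that for every real s ≥ s₀ and every subset S of L_{t,r}^+(M) containing at most one element from each B_{t,r}(ℤ)-orbit (i.e., such that for distinct N, N' ∈ S there is no γ ∈ B_{t,r}(ℤ) with γNγᵀ = N'), the family (det N)^{-s}, N ∈ S, is summable. -/
open Matrix

open BigOperators

noncomputable section
namespace KM

/-- Quadratic form of a PD matrix dominates a multiple of the sum of squares. -/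
lemma posdef_quad_lb {k : ℕ} {A : Matrix (Fin k) (Fin k) ℝ} (hA : A.PosDef) :
    ∃ ε > 0, ∀ x : Fin k → ℝ, ε * (∑ i, x i ^ 2) ≤ x ⬝ᵥ A *ᵥ x := by
  have hQ : ∀ x : Fin k → ℝ, x ≠ 0 → 0 < x ⬝ᵥ A *ᵥ x := by
    intro x hx
    simpa using hA.dotProduct_mulVec_pos hx
  rcases Nat.eq_zero_or_pos k with hk | hk
  · subst hk
    exact ⟨1, one_pos, fun x => by simp [dotProduct]⟩
  have : Nonempty (Fin k) := ⟨⟨0, hk⟩⟩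
  -- compact sphere in the sup-norm pi space
  have hcomp : IsCompact (Metric.sphere (0 : Fin k → ℝ) 1) := isCompact_sphere _ _
  have hne : (Metric.sphere (0 : Fin k → ℝ) 1).Nonempty := by
    refine ⟨fun _ => 1, ?_⟩
    simp [Metric.mem_sphere, dist_eq_norm, pi_norm_const]
  have hcont : Continuous fun x : Fin k → ℝ => x ⬝ᵥ A *ᵥ x := by
    simp only [dotProduct, mulVec]
    fun_prop
  obtain ⟨u, hu, humin⟩ := hcomp.exists_isMinOn hne hcont.continuousOn
  have hunorm : ‖u‖ = 1 := by simpa [dist_eq_norm] using hu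
  have hune : u ≠ 0 := by
    intro h; rw [h] at hunorm; simp at hunorm
  set ε := u ⬝ᵥ A *ᵥ u with hε
  have hεpos : 0 < ε := hQ u hune
  refine ⟨ε / k, by positivity, fun x => ?_⟩
  by_cases hx : x = 0
  · simp [hx, dotProduct]
  · have hxn : (0:ℝ) < ‖x‖ := norm_pos_iff.mpr hx
    set v := ‖x‖⁻¹ • x with hv
    have hvs : v ∈ Metric.sphere (0 : Fin k → ℝ) 1 := by
      simp [hv, Metric.mem_sphere, dist_eq_norm, norm_smul, abs_of_pos (inv_pos.mpr hxn),
        inv_mul_cancel₀ hxn.ne']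
    have hquad : x ⬝ᵥ A *ᵥ x = ‖x‖ ^ 2 * (v ⬝ᵥ A *ᵥ v) := by
      have hxv : x = ‖x‖ • v := by
        rw [hv, smul_smul, mul_inv_cancel₀ hxn.ne', one_smul]
      conv_lhs => rw [hxv]
      rw [smul_dotProduct, mulVec_smul, dotProduct_smul, smul_eq_mul, smul_eq_mul]
      ring
    have hmin : ε ≤ v ⬝ᵥ A *ᵥ v := humin hvs
    have hsum : ∑ i, x i ^ 2 ≤ (k : ℝ) * ‖x‖ ^ 2 := by
      have : ∀ i, x i ^ 2 ≤ ‖x‖ ^ 2 := by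
        intro i
        have := norm_le_pi_norm x i
        have h2 : |x i| ≤ ‖x‖ := by simpa using this
        calc x i ^ 2 = |x i| ^ 2 := (sq_abs _).symm
          _ ≤ ‖x‖ ^ 2 := by
            apply pow_le_pow_left₀ (abs_nonneg _) h2
      calc ∑ i, x i ^ 2 ≤ ∑ _i : Fin k, ‖x‖ ^ 2 := Finset.sum_le_sum fun i _ => this i
        _ = (k : ℝ) * ‖x‖ ^ 2 := by simp [mul_comm]
    calc ε / k * ∑ i, x i ^ 2 ≤ ε / k * ((k:ℝ) * ‖x‖ ^ 2) := by
          apply mul_le_mul_of_nonneg_left hsum (by positivity)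
      _ = ε * ‖x‖ ^ 2 := by
          field_simp
      _ ≤ ‖x‖ ^ 2 * (v ⬝ᵥ A *ᵥ v) := by
          rw [mul_comm]
          exact mul_le_mul_of_nonneg_left hmin (by positivity)
      _ = x ⬝ᵥ A *ᵥ x := hquad.symm

/-- integer cast vector -/
def zc {k : ℕ} (x : Fin k → ℤ) : Fin k → ℝ := fun i => (x i : ℝ)

lemma zc_eq_zero_iff {k : ℕ} (x : Fin k → ℤ) : zc x = 0 ↔ x = 0 := by
  constructor
  · intro h; funext i
    have := congrFun h i
    simpa [zc] using this
  · intro h; subst h; funext i; simp [zc]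

/-- Integer sublevel sets of a PD quadratic form are finite. -/
lemma finite_sublevel {k : ℕ} {A : Matrix (Fin k) (Fin k) ℝ} (hA : A.PosDef) (c : ℝ) :
    {x : Fin k → ℤ | (zc x) ⬝ᵥ A *ᵥ (zc x) ≤ c}.Finite := by
  obtain ⟨ε, hεpos, hε⟩ := posdef_quad_lb hA
  set R : ℤ := ⌈Real.sqrt (c / ε)⌉ with hR
  have hsub : {x : Fin k → ℤ | (zc x) ⬝ᵥ A *ᵥ (zc x) ≤ c} ⊆
      Set.pi Set.univ fun _ : Fin k => (Set.Icc (-R) R : Set ℤ) := by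
    intro x hx
    intro i _
    have h1 : ε * ∑ j, (zc x j) ^ 2 ≤ c := le_trans (hε (zc x)) hx
    have h2 : (zc x i) ^ 2 ≤ c / ε := by
      have hterm : (zc x i) ^ 2 ≤ ∑ j, (zc x j) ^ 2 :=
        Finset.single_le_sum (f := fun j => (zc x j) ^ 2) (fun j _ => sq_nonneg _)
          (Finset.mem_univ i)
      exact le_trans hterm ((le_div_iff₀' hεpos).mpr h1)
    have h3 : |zc x i| ≤ Real.sqrt (c / ε) := by
      have := Real.sqrt_le_sqrt h2
      rwa [Real.sqrt_sq_eq_abs] at this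
    have h4 : |zc x i| ≤ (R : ℝ) := le_trans h3 (Int.le_ceil _)
    rw [abs_le] at h4
    simp only [zc] at h4
    constructor
    · exact_mod_cast h4.1
    · exact_mod_cast h4.2
  exact Set.Finite.subset (Set.Finite.pi fun _ => Set.finite_Icc _ _) hsub

/-- Existence of a minimal nonzero integer vector for a PD form, with Bezout certificate. -/
lemma exists_min_vector {k : ℕ} (hk : 0 < k) {A : Matrix (Fin k) (Fin k) ℝ} (hA : A.PosDef) :
    ∃ x : Fin k → ℤ, x ≠ 0 ∧ (∃ cf : Fin k → ℤ, ∑ i, cf i * x i = 1) ∧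
      ∀ y : Fin k → ℤ, y ≠ 0 → (zc x) ⬝ᵥ A *ᵥ (zc x) ≤ (zc y) ⬝ᵥ A *ᵥ (zc y) := by
  have hQpos : ∀ y : Fin k → ℤ, y ≠ 0 → 0 < (zc y) ⬝ᵥ A *ᵥ (zc y) := by
    intro y hy
    have : zc y ≠ 0 := fun h => hy ((zc_eq_zero_iff y).mp h)
    simpa using hA.dotProduct_mulVec_pos this
  have : Nonempty (Fin k) := ⟨⟨0, hk⟩⟩
  set e0 : Fin k → ℤ := Pi.single ⟨0, hk⟩ 1 with he0
  have he0ne : e0 ≠ 0 := by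
    intro h
    have := congrFun h ⟨0, hk⟩
    simp [he0] at this
  set Q : (Fin k → ℤ) → ℝ := fun y => (zc y) ⬝ᵥ A *ᵥ (zc y) with hQdef
  set T : Set (Fin k → ℤ) := {y | y ≠ 0 ∧ Q y ≤ Q e0} with hT
  have hTfin : T.Finite := by
    apply (finite_sublevel hA (Q e0)).subset
    intro y hy
    exact hy.2
  have hTne : T.Nonempty := ⟨e0, he0ne, le_refl _⟩
  obtain ⟨x, hxT, hxmin⟩ := Set.exists_min_image T Q hTfin hTne
  -- global minimality
  have hmin : ∀ y : Fin k → ℤ, y ≠ 0 → Q x ≤ Q y := by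
    intro y hy
    rcases le_or_gt (Q y) (Q e0) with h | h
    · exact hxmin y ⟨hy, h⟩
    · exact le_trans (hxmin e0 ⟨he0ne, le_refl _⟩) h.le
  -- Bezout certificate via the ideal of coordinates
  have hxne := hxT.1
  set I : Ideal ℤ := Ideal.span (Set.range x) with hI
  obtain ⟨d, hd⟩ : ∃ d, I = Ideal.span {d} :=
    Submodule.IsPrincipal.principal I
  have hdvd : ∀ i, d ∣ x i := by
    intro i
    have hmem : x i ∈ I := Ideal.subset_span (Set.mem_range_self i)
    rw [hd, Ideal.mem_span_singleton] at hmem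
    exact hmem
  have hdne : d ≠ 0 := by
    intro h0
    apply hxne
    funext i
    rcases hdvd i with ⟨e, he⟩
    simp [he, h0]
  set y : Fin k → ℤ := fun i => x i / d with hy
  have hxy : ∀ i, x i = d * y i := by
    intro i
    rcases hdvd i with ⟨e, he⟩
    simp [hy, he, Int.mul_ediv_cancel_left _ hdne]
  have hyne : y ≠ 0 := by
    intro h0
    apply hxne
    funext i
    rw [hxy i, congrFun h0 i]
    simp
  have hQxy : Q x = (d : ℝ)^2 * Q y := by
    have hzc : zc x = (d:ℝ) • zc y := by
      funext i
      simp only [zc, hxy i, Pi.smul_apply, smul_eq_mul]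
      push_cast
      ring
    simp only [hQdef, hzc, smul_dotProduct, mulVec_smul, dotProduct_smul, smul_eq_mul]
    ring
  have hd1 : d * d = 1 := by
    have h1 : Q x ≤ Q y := hmin y hyne
    have h2 : (0:ℝ) < Q y := hQpos y hyne
    have h3 : (d : ℝ)^2 * Q y ≤ Q y := by rw [← hQxy]; exact h1
    have h4 : (d:ℝ)^2 ≤ 1 := by nlinarith
    have h5 : d^2 ≤ 1 := by exact_mod_cast h4
    have h6 : 1 ≤ d^2 := by
      rcases hdne.lt_or_gt with h | h <;> nlinarith
    nlinarith
  have hIone : (1:ℤ) ∈ I := by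
    rw [hd, Ideal.mem_span_singleton]
    exact (IsUnit.of_mul_eq_one d hd1).dvd
  rw [hI, Ideal.mem_span_range_iff_exists_fun] at hIone
  obtain ⟨cf, hcf⟩ := hIone
  refine ⟨x, hxne, ⟨cf, ?_⟩, hmin⟩
  simpa [smul_eq_mul] using hcf


lemma exists_unimodular_row {k : ℕ} (x : Fin (k+1) → ℤ) (cf : Fin (k+1) → ℤ)
    (hcf : ∑ i, cf i * x i = 1) :
    ∃ U : Matrix (Fin (k+1)) (Fin (k+1)) ℤ, IsUnit U.det ∧ U 0 = x := by
  let f : (Fin (k+1) → ℤ) →ₗ[ℤ] ℤ :=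
    { toFun := fun v => ∑ i, cf i * v i
      map_add' := by intro a b; simp [mul_add, Finset.sum_add_distrib]
      map_smul' := by
        intro c a
        simp only [Pi.smul_apply, smul_eq_mul, RingHom.id_apply, Finset.mul_sum]
        exact Finset.sum_congr rfl fun i _ => by ring }
  have hfx : f x = 1 := hcf
  obtain ⟨m, bN⟩ := Submodule.basisOfPid (Pi.basisFun ℤ (Fin (k+1))) (LinearMap.ker f)
  have hli : ∀ (c : ℤ), ∀ z ∈ LinearMap.ker f, c • x + z = 0 → c = 0 := by
    intro c z hz h
    have h2 := congrArg f h
    rw [map_add, _root_.map_smul, LinearMap.mem_ker.mp hz, hfx, map_zero] at h2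
    simpa using h2
  have hsp : ∀ z : Fin (k+1) → ℤ, ∃ c : ℤ, z + c • x ∈ LinearMap.ker f := by
    intro z
    refine ⟨-(f z), ?_⟩
    rw [LinearMap.mem_ker, map_add, _root_.map_smul, hfx]
    simp
  let B := Module.Basis.mkFinCons x bN hli hsp
  have hmk : m + 1 = k + 1 := by
    have e := B.indexEquiv (Pi.basisFun ℤ (Fin (k+1)))
    simpa using Fintype.card_congr e
  let B' : Module.Basis (Fin (k+1)) ℤ (Fin (k+1) → ℤ) := B.reindex (finCongr hmk)
  have hB'0 : B' 0 = x := by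
    have h1 : B' 0 = B ((finCongr hmk).symm 0) := Module.Basis.reindex_apply _ _ _
    have h2 : (finCongr hmk).symm 0 = 0 := rfl
    rw [h1, h2]
    show (Module.Basis.mkFinCons x bN hli hsp) 0 = x
    rw [congrFun (Module.Basis.coe_mkFinCons x bN hli hsp) 0]
    simp
  let e := Pi.basisFun ℤ (Fin (k+1))
  let U : Matrix (Fin (k+1)) (Fin (k+1)) ℤ := Matrix.of fun i j => B' i j
  have hUT : Uᵀ = e.toMatrix ⇑B' := by
    ext i j
    simp [U, e, Module.Basis.toMatrix_apply, Pi.basisFun_repr, Matrix.transpose_apply]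
  have h1 : e.toMatrix ⇑B' * B'.toMatrix ⇑e = 1 := Module.Basis.toMatrix_mul_toMatrix_flip e B'
  have hdet : IsUnit U.det := by
    have h2 : (e.toMatrix ⇑B').det * (B'.toMatrix ⇑e).det = 1 := by
      rw [← Matrix.det_mul, h1, Matrix.det_one]
    have : U.det = (e.toMatrix ⇑B').det := by rw [← Matrix.det_transpose U, hUT]
    rw [this]
    exact IsUnit.of_mul_eq_one _ h2
  refine ⟨U, hdet, ?_⟩
  funext j
  show B' 0 j = x j
  rw [hB'0]



/-- cast an integer matrix to a real matrix -/
def mz {a b : Type*} (U : Matrix a b ℤ) : Matrix a b ℝ := U.map fun z => (z : ℝ)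

lemma mz_apply {a b : Type*} (U : Matrix a b ℤ) (i : a) (j : b) : mz U i j = (U i j : ℝ) := rfl

lemma mz_mul {a b c : Type*} [Fintype b] (U : Matrix a b ℤ) (V : Matrix b c ℤ) :
    mz (U * V) = mz U * mz V := by
  ext i j
  simp only [mz, Matrix.map_apply, Matrix.mul_apply]
  push_cast
  rfl

lemma mz_transpose {a b : Type*} (U : Matrix a b ℤ) : mz (Uᵀ) = (mz U)ᵀ := rfl

lemma mz_det {a : Type*} [Fintype a] [DecidableEq a] (U : Matrix a a ℤ) :
    (mz U).det = (U.det : ℝ) := by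
  have h := RingHom.map_det (Int.castRingHom ℝ) U
  rw [RingHom.mapMatrix_apply] at h
  exact h.symm

lemma mz_isUnit_det {a : Type*} [Fintype a] [DecidableEq a] {U : Matrix a a ℤ}
    (h : IsUnit U.det) : IsUnit (mz U).det := by
  rw [mz_det]
  rcases Int.isUnit_iff.mp h with h1 | h1 <;> rw [h1] <;> norm_num

lemma conj_diag {ι κ : Type*} [Fintype ι] (W : Matrix κ ι ℝ) (A : Matrix ι ι ℝ) (p : κ) :
    (W * A * Wᵀ) p p = (W p) ⬝ᵥ A *ᵥ (W p) := by
  simp only [Matrix.mul_apply, Matrix.transpose_apply, dotProduct, mulVec, Finset.sum_mul,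
    Finset.mul_sum]
  rw [Finset.sum_comm]
  exact Finset.sum_congr rfl fun a _ => Finset.sum_congr rfl fun b _ => by ring

lemma conjT_eq_transpose {a b : Type*} (W : Matrix a b ℝ) : Wᴴ = Wᵀ := by
  ext i j
  simp [Matrix.conjTranspose_apply]

lemma posDef_conj {ι : Type*} [Fintype ι] [DecidableEq ι] {A : Matrix ι ι ℝ}
    (hA : A.PosDef) {W : Matrix ι ι ℝ} (hW : IsUnit W.det) : (W * A * Wᵀ).PosDef := by
  have hH : (W * A * Wᵀ).IsHermitian := by
    rw [← conjT_eq_transpose]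
    exact Matrix.isHermitian_mul_mul_conjTranspose W hA.1
  refine Matrix.PosDef.of_dotProduct_mulVec_pos hH fun x hx => ?_
  have hWT : IsUnit Wᵀ := by
    rw [Matrix.isUnit_iff_isUnit_det, Matrix.det_transpose]
    exact hW
  have hy : Wᵀ *ᵥ x ≠ 0 := by
    intro h0
    have hinj := Matrix.mulVec_injective_iff_isUnit.mpr hWT
    exact hx (hinj (by rw [h0, Matrix.mulVec_zero]))
  have key : star x ⬝ᵥ (W * A * Wᵀ) *ᵥ x = star (Wᵀ *ᵥ x) ⬝ᵥ A *ᵥ (Wᵀ *ᵥ x) := by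
    have hsx : star x = x := by funext i; simp
    have hsy : star (Wᵀ *ᵥ x) = Wᵀ *ᵥ x := by funext i; simp
    rw [hsx, hsy, Matrix.mul_assoc, ← Matrix.mulVec_mulVec, ← Matrix.mulVec_mulVec,
      Matrix.dotProduct_mulVec x W, ← Matrix.mulVec_transpose]
  rw [key]
  exact hA.dotProduct_mulVec_pos hy

lemma posDef_reindex {ι κ : Type*} [Fintype ι] [Fintype κ] [DecidableEq ι] [DecidableEq κ]
    {M : Matrix ι ι ℝ} (hM : M.PosDef) (e : κ ≃ ι) : (M.submatrix e e).PosDef := by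
  refine Matrix.PosDef.of_dotProduct_mulVec_pos ?_ ?_
  · exact (Matrix.isHermitian_submatrix_equiv e).mpr hM.1
  · intro x hx
    have hxe : (x ∘ e.symm) ≠ 0 := by
      intro h0
      apply hx
      funext k
      have := congrFun h0 (e k)
      simpa using this
    have h1 : (M.submatrix ⇑e ⇑e) *ᵥ x = (M *ᵥ (x ∘ e.symm)) ∘ ⇑e :=
      Matrix.submatrix_mulVec_equiv M x ⇑e e
    have hsx : star x = x := by funext i; simp
    have hsy : star (x ∘ e.symm) = x ∘ e.symm := by funext i; simp
    have h2 : star x ⬝ᵥ (M.submatrix ⇑e ⇑e) *ᵥ x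
        = star (x ∘ e.symm) ⬝ᵥ M *ᵥ (x ∘ e.symm) := by
      rw [hsx, hsy, h1]
      refine Fintype.sum_equiv e _ _ fun k => by simp
    rw [h2]
    exact hM.dotProduct_mulVec_pos hxe

lemma posDef_diag_pos {ι : Type*} [Fintype ι] [DecidableEq ι] {F : Matrix ι ι ℝ}
    (hF : F.PosDef) (i : ι) : 0 < F i i := by
  have h := hF.dotProduct_mulVec_pos (x := Pi.single i 1) (by
    intro h
    have := congrFun h i
    simp at this)
  have hval : star (Pi.single i 1 : ι → ℝ) ⬝ᵥ F *ᵥ Pi.single i 1 = F i i := by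
    have hs : star (Pi.single i 1 : ι → ℝ) = Pi.single i 1 := by funext j; simp [Pi.single_apply]
    rw [hs, Matrix.mulVec_single]
    simp [dotProduct, Pi.single_apply]
  rwa [hval] at h

lemma posDef_entry_le {ι : Type*} [Fintype ι] [DecidableEq ι] {F : Matrix ι ι ℝ}
    (hF : F.PosDef) (i j : ι) : |F i j| ≤ max (F i i) (F j j) := by
  rcases eq_or_ne i j with rfl | hij
  · rw [abs_of_pos (posDef_diag_pos hF i)]
    exact le_max_left _ _
  · have hsymm : F j i = F i j := by
      have h := hF.1
      have := congrFun (congrFun h i) j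
      simp only [Matrix.conjTranspose_apply] at this
      rw [← this]
      simp
    have hq : ∀ a b : ℝ, 0 ≤ a^2 * F i i + a * b * (2 * F i j) + b^2 * F j j := by
      intro a b
      have h := hF.posSemidef.dotProduct_mulVec_nonneg (Pi.single i a + Pi.single j b)
      have hs : star (Pi.single i a + Pi.single j b : ι → ℝ) = Pi.single i a + Pi.single j b := by
        funext p; simp [Pi.single_apply]
      rw [hs] at h
      have hval : (Pi.single i a + Pi.single j b : ι → ℝ) ⬝ᵥ F *ᵥ (Pi.single i a + Pi.single j b)
          = a^2 * F i i + a * b * (2 * F i j) + b^2 * F j j := by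
        rw [add_dotProduct, single_dotProduct, single_dotProduct,
          Matrix.mulVec_add, Matrix.mulVec_single, Matrix.mulVec_single]
        simp only [Pi.add_apply, Pi.smul_apply, Matrix.col_apply, op_smul_eq_mul]
        rw [hsymm]
        ring
      rw [hval] at h
      exact h
    have h1 := hq 1 (-1)
    have h2 := hq 1 1
    rw [abs_le']
    constructor
    · have := le_max_left (F i i) (F j j)
      have := le_max_right (F i i) (F j j)
      nlinarith [le_max_left (F i i) (F j j), le_max_right (F i i) (F j j)]
    · nlinarith [le_max_left (F i i) (F j j), le_max_right (F i i) (F j j)]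

def redC : ℕ → ℝ
  | 0 => 1
  | (n+1) => (4/3:ℝ)^n * redC n

lemma redC_pos (n : ℕ) : 0 < redC n := by
  induction n with
  | zero => norm_num [redC]
  | succ n ih => rw [redC]; positivity

theorem reduction (n : ℕ) : ∀ (A : Matrix (Fin n) (Fin n) ℝ), A.PosDef →
    ∃ U : Matrix (Fin n) (Fin n) ℤ, IsUnit U.det ∧
      ∏ i, (mz U * A * (mz U)ᵀ) i i ≤ redC n * A.det := by
  induction n with
  | zero =>
    intro A _
    refine ⟨1, by simp, ?_⟩
    simp [redC, Matrix.det_isEmpty]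
  | succ n IH =>
    intro A hA
    obtain ⟨x, hxne, ⟨cf, hcf⟩, hmin⟩ := exists_min_vector (Nat.succ_pos n) hA
    obtain ⟨W, hWdet, hW0⟩ := exists_unimodular_row x cf hcf
    set B : Matrix (Fin (n+1)) (Fin (n+1)) ℝ := mz W * A * (mz W)ᵀ with hB
    have hBpd : B.PosDef := posDef_conj hA (mz_isUnit_det hWdet)
    set μ := B 0 0 with hμ
    have hμx : μ = (zc x) ⬝ᵥ A *ᵥ (zc x) := by
      rw [hμ, hB, conj_diag, show (mz W) 0 = zc x from by
        rw [show (mz W) 0 = zc (W 0) from rfl, hW0]]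
    have hμmin : ∀ y : Fin (n+1) → ℤ, y ≠ 0 → μ ≤ (zc y) ⬝ᵥ A *ᵥ (zc y) := by
      intro y hy; rw [hμx]; exact hmin y hy
    have hμpos : 0 < μ := posDef_diag_pos hBpd 0
    set σ : (Fin 1 ⊕ Fin n) ≃ Fin (n+1) :=
      finSumFinEquiv.trans (finCongr (Nat.add_comm 1 n)) with hσdef
    set B' := B.submatrix σ σ with hB'
    have hB'pd : B'.PosDef := posDef_reindex hBpd σ
    set A₁ := B'.toBlocks₁₁ with hA₁
    set β := B'.toBlocks₁₂ with hβ
    set C := B'.toBlocks₂₁ with hC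
    set D := B'.toBlocks₂₂ with hD
    have hfb : B' = fromBlocks A₁ β C D := (Matrix.fromBlocks_toBlocks B').symm
    have hσ0 : σ (Sum.inl 0) = 0 := rfl
    set b := A₁ 0 0 with hb
    have hbμ : b = μ := by
      rw [hb, hA₁]
      show B' (Sum.inl 0) (Sum.inl 0) = μ
      rw [hB', Matrix.submatrix_apply, hσ0, hμ]
    have hbpos : 0 < b := hbμ ▸ hμpos
    have hdetA₁ : A₁.det = b := Matrix.det_fin_one A₁
    have hA₁unit : IsUnit A₁.det := by
      rw [hdetA₁]; exact isUnit_iff_ne_zero.mpr hbpos.ne'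
    haveI : Invertible A₁ := A₁.invertibleOfIsUnitDet hA₁unit
    have hA₁inv : A₁⁻¹ = Matrix.of fun _ _ => b⁻¹ := by
      rw [Matrix.inv_def, Matrix.adjugate_fin_one, Matrix.det_fin_one, Ring.inverse_eq_inv]
      ext i j
      rw [Subsingleton.elim i 0, Subsingleton.elim j 0]
      simp [Matrix.smul_apply, Matrix.one_apply, hb]
    have hCβ : C = βᵀ := by
      ext i j
      have h1 := congrFun (congrFun hB'pd.1 (Sum.inr i)) (Sum.inl j)
      rw [Matrix.conjTranspose_apply] at h1
      show B' (Sum.inr i) (Sum.inl j) = B' (Sum.inl j) (Sum.inr i)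
      rw [← h1]; simp
    have hβH : βᴴ = βᵀ := conjT_eq_transpose β
    have hfb' : B' = fromBlocks A₁ β βᴴ D := by rw [hfb, hCβ, ← hβH]
    have hA₁herm : A₁.IsHermitian := by
      ext i j
      rw [Matrix.conjTranspose_apply, Subsingleton.elim j i]
      simp
    have hA₁T : A₁ᵀ = A₁ := by
      ext i j
      rw [Matrix.transpose_apply, Subsingleton.elim i j]
    set S := D - C * A₁⁻¹ * β with hS
    have hSherm : S.IsHermitian := by
      have h2 := (Matrix.IsHermitian.fromBlocks₁₁ β D hA₁herm).mp (by rw [← hfb']; exact hB'pd.1)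
      rw [hS, hCβ, ← hβH]; exact h2
    have hSpd : S.PosDef := by
      refine Matrix.PosDef.of_dotProduct_mulVec_pos hSherm fun y hy => ?_
      set xv : Fin 1 → ℝ := -((A₁⁻¹ * β) *ᵥ y) with hxv
      have hne : (Sum.elim xv y : Fin 1 ⊕ Fin n → ℝ) ≠ 0 := by
        intro h0
        apply hy; funext i; exact congrFun h0 (Sum.inr i)
      have h := hB'pd.dotProduct_mulVec_pos hne
      rw [hfb', Matrix.dotProduct_mulVec] at h
      rw [Matrix.schur_complement_eq₁₁ β D xv y hA₁herm] at h
      have hz : xv + (A₁⁻¹ * β) *ᵥ y = 0 := by rw [hxv]; exact neg_add_cancel _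
      rw [hz] at h
      simp only [star_zero, Matrix.zero_vecMul, zero_dotProduct, zero_add] at h
      rw [hS, hCβ, ← hβH, Matrix.dotProduct_mulVec]
      exact h
    have hdetB' : B'.det = b * S.det := by
      rw [hfb, Matrix.det_fromBlocks₁₁, hdetA₁, Matrix.invOf_eq_nonsing_inv, ← hS]
    have hdetB'A : B'.det = A.det := by
      rw [hB', Matrix.det_submatrix_equiv_self, hB, Matrix.det_mul, Matrix.det_mul,
        Matrix.det_transpose, mz_det]
      rcases Int.isUnit_iff.mp hWdet with h | h <;> rw [h] <;> push_cast <;> ring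
    obtain ⟨V, hVdet, hVprod⟩ := IH S hSpd
    set v := mz V with hv
    set q : Fin n → ℝ := fun i => (v * C) i 0 with hq
    set g : Matrix (Fin n) (Fin 1) ℤ := Matrix.of (fun i _ => -(round (q i / b))) with hgdef
    set G : Matrix (Fin 1 ⊕ Fin n) (Fin 1 ⊕ Fin n) ℤ := Matrix.fromBlocks 1 0 g V with hG
    have hGdet : IsUnit G.det := by
      rw [hG, Matrix.det_fromBlocks_zero₁₂, Matrix.det_one, one_mul]; exact hVdet
    set Wσ : Matrix (Fin 1 ⊕ Fin n) (Fin (n+1)) ℤ := W.submatrix σ id with hWσ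
    set Z := G * Wσ with hZ
    set F := mz Z * A * (mz Z)ᵀ with hF
    have hmid : mz Wσ * A * (mz Wσ)ᵀ = B' := by
      ext p r
      rw [hB', hB]
      rfl
    have hFB' : F = mz G * B' * (mz G)ᵀ := by
      rw [hF, hZ, mz_mul, Matrix.transpose_mul, ← hmid]
      simp only [Matrix.mul_assoc]
    have hFpd : F.PosDef := by
      rw [hFB']
      exact posDef_conj hB'pd (mz_isUnit_det hGdet)
    have hFmin : ∀ p, μ ≤ F p p := by
      intro p
      have hZp : Z p ≠ 0 := by
        intro h0
        have hFpp : F p p = 0 := by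
          rw [hF, conj_diag, show (mz Z) p = zc (Z p) from rfl, h0]
          simp [zc, dotProduct]
        linarith [posDef_diag_pos hFpd p]
      have h2 := hμmin (Z p) hZp
      rw [hF, conj_diag]
      exact h2
    set g' := mz g with hg'
    have hmzG : mz G = Matrix.fromBlocks 1 0 g' v := by
      rw [hG, mz, Matrix.fromBlocks_map]
      have h1 : (1 : Matrix (Fin 1) (Fin 1) ℤ).map (fun z : ℤ => (z:ℝ)) = 1 := by
        ext i j; simp [Matrix.one_apply, apply_ite]
      have h0 : (0 : Matrix (Fin 1) (Fin n) ℤ).map (fun z : ℤ => (z:ℝ)) = 0 := by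
        ext i j; simp
      rw [h1, h0]; rfl
    set Y := g' * A₁ + v * C with hY
    have hFblocks : F = Matrix.fromBlocks A₁ (A₁ * g'ᵀ + β * vᵀ) Y
        (Y * g'ᵀ + (g' * β + v * D) * vᵀ) := by
      rw [hFB', hmzG, hfb, Matrix.fromBlocks_transpose, Matrix.fromBlocks_multiply,
        Matrix.fromBlocks_multiply]
      rw [hY]
      congr 1 <;> simp [Matrix.one_mul, Matrix.zero_mul, Matrix.mul_zero, Matrix.mul_one]
    have hdiag1 : F (Sum.inl 0) (Sum.inl 0) = b := by
      rw [hFblocks]; rfl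
    have hAinv1 : A₁ * A₁⁻¹ = 1 := Matrix.mul_nonsing_inv _ hA₁unit
    have hinvA1 : A₁⁻¹ * A₁ = 1 := Matrix.nonsing_inv_mul _ hA₁unit
    have hCT : Cᵀ = β := by rw [hCβ, Matrix.transpose_transpose]
    have hYT : Yᵀ = A₁ * g'ᵀ + β * vᵀ := by
      rw [hY, Matrix.transpose_add, Matrix.transpose_mul, Matrix.transpose_mul, hA₁T, hCT]
    have hc1 : ∀ X : Matrix (Fin 1) (Fin n) ℝ, A₁⁻¹ * (A₁ * X) = X := fun X => by
      rw [← Matrix.mul_assoc, hinvA1, Matrix.one_mul]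
    have hc2 : ∀ X : Matrix (Fin 1) (Fin n) ℝ, A₁ * (A₁⁻¹ * X) = X := fun X => by
      rw [← Matrix.mul_assoc, hAinv1, Matrix.one_mul]
    have hid : Y * g'ᵀ + (g' * β + v * D) * vᵀ = Y * A₁⁻¹ * Yᵀ + v * S * vᵀ := by
      rw [hYT]
      conv_lhs => rw [hY]
      conv_rhs => rw [hY, hS]
      simp only [Matrix.add_mul, Matrix.mul_add, Matrix.sub_mul, Matrix.mul_sub,
        Matrix.mul_assoc, hc1, hc2]
      abel
    have hdiag2 : ∀ i, F (Sum.inr i) (Sum.inr i)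
        = (Y * A₁⁻¹ * Yᵀ) i i + (v * S * vᵀ) i i := by
      intro i
      rw [hFblocks]
      show (Y * g'ᵀ + (g' * β + v * D) * vᵀ) i i = _
      rw [hid]
      simp [Matrix.add_apply]
    have hYentry : ∀ i, |Y i 0| ≤ b / 2 := by
      intro i
      have hYi : Y i 0 = q i + (g i 0 : ℝ) * b := by
        rw [hY, Matrix.add_apply, hq]
        have : (g' * A₁) i 0 = (g i 0 : ℝ) * b := by
          rw [Matrix.mul_apply]
          rw [show (Finset.univ : Finset (Fin 1)) = {0} from rfl, Finset.sum_singleton]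
          rw [hg', mz_apply, hb]
        rw [this]; ring
      have hgi : (g i 0 : ℝ) = -(round (q i / b) : ℤ) := by rw [hgdef]; simp
      have h1 := abs_sub_round (q i / b)
      have hb0 : b ≠ 0 := ne_of_gt hbpos
      have h2 : Y i 0 = b * (q i / b - round (q i / b)) := by
        rw [hYi, hgi]; field_simp; ring
      rw [h2, abs_mul, abs_of_pos hbpos]
      calc b * |q i / b - ↑(round (q i / b))| ≤ b * (1/2) :=
            mul_le_mul_of_nonneg_left h1 hbpos.le
        _ = b / 2 := by ring
    have hterm : ∀ i, (Y * A₁⁻¹ * Yᵀ) i i = Y i 0 * b⁻¹ * Y i 0 := by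
      intro i
      rw [Matrix.mul_apply]
      rw [show (Finset.univ : Finset (Fin 1)) = {0} from rfl, Finset.sum_singleton]
      rw [Matrix.mul_apply]
      rw [show (Finset.univ : Finset (Fin 1)) = {0} from rfl, Finset.sum_singleton]
      rw [hA₁inv, Matrix.transpose_apply]
      rfl
    have htermb : ∀ i, 0 ≤ (Y * A₁⁻¹ * Yᵀ) i i ∧ (Y * A₁⁻¹ * Yᵀ) i i ≤ b / 4 := by
      intro i
      rw [hterm i]
      have h := hYentry i
      have habs := abs_le.mp h
      have hb4 : Y i 0 * b⁻¹ * Y i 0 = (Y i 0)^2 * b⁻¹ := by ring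
      constructor
      · rw [hb4]; positivity
      · rw [hb4]
        have h2 : (Y i 0)^2 ≤ (b/2)^2 := sq_le_sq' (by linarith [habs.1]) habs.2
        have h3 := mul_le_mul_of_nonneg_right h2 (inv_nonneg.mpr hbpos.le)
        calc (Y i 0)^2 * b⁻¹ ≤ (b/2)^2 * b⁻¹ := h3
          _ = b / 4 := by field_simp; ring
    set t : Fin n → ℝ := fun i => (v * S * vᵀ) i i with ht
    have hd43 : ∀ i, F (Sum.inr i) (Sum.inr i) ≤ 4/3 * t i := by
      intro i
      have h1 := hFmin (Sum.inr i)
      have h2 := hdiag2 i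
      have h3 := (htermb i).2
      have h4 : b ≤ F (Sum.inr i) (Sum.inr i) := hbμ ▸ h1
      have ht' : t i = (v * S * vᵀ) i i := rfl
      rw [h2] at h4 ⊢
      rw [← ht'] at *
      linarith
    have hprodF : ∏ p : Fin 1 ⊕ Fin n, F p p ≤ redC (n+1) * A.det := by
      rw [Fintype.prod_sum_type]
      have hone : ∏ a : Fin 1, F (Sum.inl a) (Sum.inl a) = b := by
        rw [show (Finset.univ : Finset (Fin 1)) = {0} from rfl, Finset.prod_singleton, hdiag1]
      rw [hone]
      have hF2nonneg : ∀ i, (0:ℝ) ≤ F (Sum.inr i) (Sum.inr i) :=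
        fun i => (posDef_diag_pos hFpd _).le
      have hstep : ∏ i, F (Sum.inr i) (Sum.inr i) ≤ ∏ i, ((4:ℝ)/3 * t i) :=
        Finset.prod_le_prod (fun i _ => hF2nonneg i) (fun i _ => hd43 i)
      have hprodt : ∏ i, ((4:ℝ)/3 * t i) = (4/3:ℝ)^n * ∏ i, t i := by
        rw [Finset.prod_mul_distrib, Finset.prod_const, Finset.card_univ, Fintype.card_fin]
      have hIHt : ∏ i, t i ≤ redC n * S.det := hVprod
      have hSdetpos : 0 < S.det := hSpd.det_pos
      calc b * ∏ i, F (Sum.inr i) (Sum.inr i)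
          ≤ b * ((4/3:ℝ)^n * (redC n * S.det)) := by
            apply mul_le_mul_of_nonneg_left _ hbpos.le
            calc ∏ i, F (Sum.inr i) (Sum.inr i) ≤ ∏ i, ((4:ℝ)/3 * t i) := hstep
              _ = (4/3:ℝ)^n * ∏ i, t i := hprodt
              _ ≤ (4/3:ℝ)^n * (redC n * S.det) :=
                  mul_le_mul_of_nonneg_left hIHt (by positivity)
        _ = redC (n+1) * (b * S.det) := by rw [redC]; ring
        _ = redC (n+1) * B'.det := by rw [hdetB']
        _ = redC (n+1) * A.det := by rw [hdetB'A]
    set U : Matrix (Fin (n+1)) (Fin (n+1)) ℤ := Z.submatrix σ.symm id with hU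
    have hcomp : (σ : (Fin 1 ⊕ Fin n) → Fin (n+1)) ∘ σ.symm = id := by
      funext p; simp
    refine ⟨U, ?_, ?_⟩
    · have hsub : U = G.submatrix σ.symm σ.symm * W := by
        rw [hU, hZ, Matrix.submatrix_mul G Wσ σ.symm σ.symm id σ.symm.bijective, hWσ,
          Matrix.submatrix_submatrix, hcomp]
        simp [Matrix.submatrix_id_id]
      rw [hsub, Matrix.det_mul, Matrix.det_submatrix_equiv_self]
      exact hGdet.mul hWdet
    · have hUF : mz U * A * (mz U)ᵀ = F.submatrix σ.symm σ.symm := by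
        ext p r
        rw [hF]
        rfl
      rw [hUF]
      have hpr : ∏ j, F.submatrix σ.symm σ.symm j j = ∏ p, F p p := by
        rw [← Equiv.prod_comp σ.symm (fun p => F p p)]
        rfl
      rw [hpr]
      exact hprodF

lemma mz_add {a b : Type*} (A B : Matrix a b ℤ) : mz (A + B) = mz A + mz B := by
  ext i j
  simp [mz, Matrix.add_apply]

lemma int_rep {a b : Type*} {A : Matrix a b ℝ} (h : IsIntegerMatrix A) :
    ∃ Az : Matrix a b ℤ, mz Az = A := by
  refine ⟨Matrix.of fun i j => Classical.choose (h i j), ?_⟩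
  ext i j
  exact (Classical.choose_spec (h i j)).symm

lemma half_rep {ι : Type*} {A : Matrix ι ι ℝ} (h : IsHalfIntegral A) :
    ∃ Az : Matrix ι ι ℤ, mz Az = (2:ℝ) • A := by
  refine ⟨Matrix.of fun i j => Classical.choose (h.2 i j), ?_⟩
  ext i j
  have hs := Classical.choose_spec (h.2 i j)
  show ((Classical.choose (h.2 i j) : ℤ) : ℝ) = (2:ℝ) • A i j
  rw [smul_eq_mul, ← hs]

set_option maxHeartbeats 2000000 in
lemma reduce_in_orbit (t r : ℕ) (M : Matrix (Fin r) (Fin r) ℝ) (hM : LPlus M) :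
    ∃ c₁ c₂ : ℝ, 0 ≤ c₁ ∧ 0 ≤ c₂ ∧ ∀ N ∈ LtrPlus t r M, ∃ γ,
      InBtr t r γ ∧ ∀ p q, |(γ * N * γᵀ) p q| ≤ c₁ * N.det + c₂ := by
  obtain ⟨hMsymm, hMpd, hMhalf⟩ := hM
  obtain ⟨Mz, hMz⟩ := half_rep hMhalf
  set M2 : Matrix (Fin r) (Fin r) ℝ := mz Mz with hM2def
  have hM2 : M2 = (2:ℝ) • M := hMz
  have hMdetpos : 0 < M.det := hMpd.det_pos
  have hMunit : IsUnit M.det := isUnit_iff_ne_zero.mpr hMdetpos.ne'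
  have hM2det : M2.det = 2^r * M.det := by
    rw [hM2, Matrix.det_smul, Fintype.card_fin]
  have hM2detpos : 0 < M2.det := by rw [hM2det]; positivity
  have hM2unit : IsUnit M2.det := isUnit_iff_ne_zero.mpr hM2detpos.ne'
  have hd₂cast : ((Mz.det : ℤ) : ℝ) = M2.det := (mz_det Mz).symm
  have hd₂pos : (0:ℤ) < Mz.det := by
    have : (0:ℝ) < ((Mz.det : ℤ) : ℝ) := by rw [hd₂cast]; exact hM2detpos
    exact_mod_cast this
  set k : ℝ := 2 * (Mz.det : ℝ) with hk
  have hkpos : 0 < k := by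
    rw [hk]
    have : (0:ℝ) < (Mz.det : ℝ) := by exact_mod_cast hd₂pos
    linarith
  set cR : ℝ := ∑ a : Fin r, ∑ bb : Fin r, |M2 a bb| with hcR
  have hcRnn : 0 ≤ cR :=
    Finset.sum_nonneg fun _ _ => Finset.sum_nonneg fun _ _ => abs_nonneg _
  set cMinv : ℝ := ∑ a : Fin r, ∑ bb : Fin r, |M⁻¹ a bb| with hcMinv
  have hcMinvnn : 0 ≤ cMinv :=
    Finset.sum_nonneg fun _ _ => Finset.sum_nonneg fun _ _ => abs_nonneg _
  set cMabs : ℝ := ∑ a : Fin r, ∑ bb : Fin r, |M a bb| with hcMabs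
  have hcMabsnn : (0:ℝ) ≤ cMabs :=
    Finset.sum_nonneg fun _ _ => Finset.sum_nonneg fun _ _ => abs_nonneg _
  set c₃ : ℝ := cR^2 * cMinv with hc₃
  have hc₃nn : (0:ℝ) ≤ c₃ := mul_nonneg (sq_nonneg cR) hcMinvnn
  have hc₁nn : (0:ℝ) ≤ redC t * k^(t-1) / M.det :=
    div_nonneg (mul_nonneg (redC_pos t).le (pow_nonneg hkpos.le _)) hMdetpos.le
  refine ⟨redC t * k^(t-1) / M.det, c₃ + cR + cMabs, hc₁nn, by linarith, ?_⟩
  intro N hN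
  obtain ⟨N₂, R₂, hN₂, hR₂, hblock, hNLP⟩ := hN
  obtain ⟨hNsymm, hNpd, hNhalf⟩ := hNLP
  obtain ⟨Rz, hRz⟩ := int_rep hR₂
  obtain ⟨Nz, hNz⟩ := half_rep hNhalf
  set P : Matrix (Fin t) (Fin r) ℝ := (1/2 : ℝ) • R₂ with hP
  have hPH : Pᴴ = (1/2 : ℝ) • R₂ᵀ := by
    rw [conjT_eq_transpose, hP, Matrix.transpose_smul]
  have hNfb : N = Matrix.fromBlocks N₂ P Pᴴ M := by rw [hblock, hPH, hP]
  haveI : Invertible M := M.invertibleOfIsUnitDet hMunit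
  set N₁ := N₂ - P * M⁻¹ * Pᴴ with hN₁
  have hN₁pd : N₁.PosDef := by
    refine Matrix.PosDef.of_dotProduct_mulVec_pos ?_ ?_
    · have h1 : N₂.IsHermitian := by
        rw [Matrix.IsHermitian, conjT_eq_transpose]; exact hN₂.1
      have h2 : (P * M⁻¹ * Pᴴ).IsHermitian :=
        Matrix.isHermitian_mul_mul_conjTranspose P hMpd.1.inv
      exact h1.sub h2
    · intro x hx
      set yv : Fin r → ℝ := -((M⁻¹ * Pᴴ) *ᵥ x) with hyv
      have hne : (Sum.elim x yv : Fin t ⊕ Fin r → ℝ) ≠ 0 := by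
        intro h0; apply hx; funext i; exact congrFun h0 (Sum.inl i)
      have h := hNpd.dotProduct_mulVec_pos hne
      rw [hNfb, Matrix.dotProduct_mulVec,
        Matrix.schur_complement_eq₂₂ N₂ P x yv hMpd.1] at h
      have hz : (M⁻¹ * Pᴴ) *ᵥ x + yv = 0 := by rw [hyv]; exact add_neg_cancel _
      rw [hz] at h
      simp only [star_zero, Matrix.zero_vecMul, zero_dotProduct, zero_add] at h
      rw [hN₁, Matrix.dotProduct_mulVec]
      exact h
  have hdetN : N.det = M.det * N₁.det := by
    rw [hNfb, Matrix.det_fromBlocks₂₂, Matrix.invOf_eq_nonsing_inv, ← hN₁]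
  have hN₁detpos : 0 < N₁.det := hN₁pd.det_pos
  have hNdetpos : 0 < N.det := by rw [hdetN]; exact mul_pos hMdetpos hN₁detpos
  obtain ⟨U, hUdet, hUprod⟩ := reduction t N₁ hN₁pd
  set u := mz U with hu
  set B₁ := u * N₁ * uᵀ with hB₁
  have hB₁pd : B₁.PosDef := posDef_conj hN₁pd (mz_isUnit_det hUdet)
  set X : Matrix (Fin t) (Fin r) ℝ := mz (U * Rz) * M2⁻¹ with hX
  set w : Matrix (Fin t) (Fin r) ℤ := Matrix.of fun i j => -(round (X i j)) with hwdef
  set Rr : Matrix (Fin t) (Fin r) ℤ := U * Rz + w * Mz with hRr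
  have hRrval : mz Rr = (X + mz w) * M2 := by
    rw [hRr, mz_add, mz_mul, mz_mul, Matrix.add_mul, hX, Matrix.mul_assoc,
      Matrix.nonsing_inv_mul M2 hM2unit, Matrix.mul_one, mz_mul]
  have hhalfbox : ∀ i a, |(X + mz w) i a| ≤ 1/2 := by
    intro i a
    have hwa : mz w i a = -((round (X i a) : ℤ) : ℝ) := by
      rw [hwdef]; simp [mz_apply]
    rw [Matrix.add_apply, hwa]
    have h := abs_sub_round (X i a)
    calc |X i a + -((round (X i a) : ℤ) : ℝ)| = |X i a - round (X i a)| := by ring_nf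
      _ ≤ 1/2 := abs_sub_round _
  have hboxed : ∀ i j, |mz Rr i j| ≤ cR := by
    intro i j
    rw [hRrval, Matrix.mul_apply]
    refine le_trans (Finset.abs_sum_le_sum_abs _ _) ?_
    have hterm : ∀ a, |(X + mz w) i a * M2 a j| ≤ |M2 a j| := by
      intro a
      rw [abs_mul]
      have h2 := hhalfbox i a
      nlinarith [abs_nonneg (M2 a j), abs_nonneg ((X + mz w) i a)]
    refine le_trans (Finset.sum_le_sum fun a _ => hterm a) ?_
    rw [hcR]
    refine Finset.sum_le_sum fun a _ => ?_
    exact Finset.single_le_sum (f := fun bb => |M2 a bb|) (fun _ _ => abs_nonneg _)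
      (Finset.mem_univ j)
  set γ : Matrix (Fin t ⊕ Fin r) (Fin t ⊕ Fin r) ℝ := Matrix.fromBlocks u (mz w) 0 1 with hγ
  have hγBtr : InBtr t r γ := by
    refine ⟨u, mz w, fun i j => ⟨U i j, rfl⟩, ?_, fun i j => ⟨w i j, rfl⟩, rfl⟩
    rw [hu, mz_det]
    rcases Int.isUnit_iff.mp hUdet with h | h <;> rw [h] <;> norm_num
  set P'' : Matrix (Fin t) (Fin r) ℝ := (1/2 : ℝ) • mz Rr with hP''
  have hP''val : P'' = u * P + (mz w) * M := by
    have h1 : mz Rr = u * R₂ + mz w * M2 := by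
      rw [hRr, mz_add, mz_mul, mz_mul, hRz, hu, hM2def]
    rw [hP'', h1, smul_add]
    congr 1
    · rw [← Matrix.mul_smul, hP]
    · rw [← Matrix.mul_smul, hM2, smul_smul]
      norm_num
  have hMT : Mᵀ = M := hMsymm
  have hMc1 : ∀ Xm : Matrix (Fin r) (Fin t) ℝ, M⁻¹ * (M * Xm) = Xm := fun Xm => by
    rw [← Matrix.mul_assoc, Matrix.nonsing_inv_mul M hMunit, Matrix.one_mul]
  have hMc2 : ∀ Xm : Matrix (Fin r) (Fin t) ℝ, M * (M⁻¹ * Xm) = Xm := fun Xm => by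
    rw [← Matrix.mul_assoc, Matrix.mul_nonsing_inv M hMunit, Matrix.one_mul]
  set F := γ * N * γᵀ with hF
  have hPT : Pᴴ = Pᵀ := conjT_eq_transpose P
  have hFblocks : F = Matrix.fromBlocks (B₁ + P'' * M⁻¹ * P''ᵀ) P'' P''ᵀ M := by
    rw [hF, hγ, hNfb, hPT, Matrix.fromBlocks_transpose, Matrix.fromBlocks_multiply,
      Matrix.fromBlocks_multiply]
    simp only [Matrix.zero_mul, Matrix.mul_zero, Matrix.one_mul, Matrix.mul_one,
      Matrix.transpose_zero, Matrix.transpose_one, zero_add, add_zero]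
    refine Matrix.fromBlocks_inj.mpr ⟨?_, ?_, ?_, rfl⟩
    · rw [hB₁, hN₁, hPT, hP''val, Matrix.transpose_add, Matrix.transpose_mul, Matrix.transpose_mul,
        hMT]
      simp only [Matrix.add_mul, Matrix.mul_add, Matrix.sub_mul, Matrix.mul_sub,
        Matrix.mul_assoc, hMc1, hMc2]
      abel
    · exact hP''val.symm
    · rw [hP''val, Matrix.transpose_add, Matrix.transpose_mul, Matrix.transpose_mul, hMT]
  set Γz : Matrix (Fin t ⊕ Fin r) (Fin t ⊕ Fin r) ℤ := Matrix.fromBlocks U w 0 1 with hΓz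
  have hmzΓ : mz Γz = γ := by
    rw [hΓz, hγ, mz, Matrix.fromBlocks_map]
    have h1 : (1 : Matrix (Fin r) (Fin r) ℤ).map (fun z : ℤ => (z:ℝ)) = 1 := by
      ext i j; simp [Matrix.one_apply, apply_ite]
    have h0 : (0 : Matrix (Fin r) (Fin t) ℤ).map (fun z : ℤ => (z:ℝ)) = 0 := by
      ext i j; simp
    rw [h1, h0]; rfl
  set Fz := Γz * Nz * Γzᵀ with hFzdef
  have hFzval : mz Fz = (2:ℝ) • F := by
    rw [hFzdef, mz_mul, mz_mul, mz_transpose, hmzΓ, hNz, hF, Matrix.mul_smul, Matrix.smul_mul]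
  have hMinv2 : M⁻¹ = (2:ℝ) • M2⁻¹ := by
    apply Matrix.inv_eq_right_inv
    have hMval : M = (2:ℝ)⁻¹ • M2 := by rw [hM2, smul_smul]; norm_num
    rw [hMval, Matrix.smul_mul, Matrix.mul_smul, smul_smul,
      Matrix.mul_nonsing_inv M2 hM2unit]
    norm_num
  have hM2inv : M2⁻¹ = ((Mz.det : ℝ))⁻¹ • mz (Mz.adjugate) := by
    rw [Matrix.inv_def, Ring.inverse_eq_inv, mz_det]
    congr 1
    rw [hM2def, mz, mz]
    exact ((Int.castRingHom ℝ).map_adjugate Mz).symm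
  have hPPint : P'' * M⁻¹ * P''ᵀ = k⁻¹ • mz (Rr * Mz.adjugate * Rrᵀ) := by
    rw [hP'', hMinv2, hM2inv, mz_mul, mz_mul, mz_transpose, Matrix.transpose_smul]
    simp only [Matrix.smul_mul, Matrix.mul_smul, smul_smul]
    congr 1
    rw [hk]
    have : ((Mz.det : ℝ)) ≠ 0 := by
      have : (0:ℝ) < (Mz.det : ℝ) := by exact_mod_cast hd₂pos
      linarith
    field_simp
  -- integrality of k * B₁ diagonal
  have hB₁diag_eq : ∀ j : Fin t, B₁ j j
      = F (Sum.inl j) (Sum.inl j) - (P'' * M⁻¹ * P''ᵀ) j j := by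
    intro j
    rw [hFblocks]
    show B₁ j j = (B₁ + P'' * M⁻¹ * P''ᵀ) j j - _
    rw [Matrix.add_apply]; ring
  have hint : ∀ j : Fin t, ∃ z : ℤ, (z:ℝ) = k * B₁ j j := by
    intro j
    refine ⟨Mz.det * Fz (Sum.inl j) (Sum.inl j) - (Rr * Mz.adjugate * Rrᵀ) j j, ?_⟩
    have h2 : ((Fz (Sum.inl j) (Sum.inl j) : ℤ) : ℝ) = 2 * F (Sum.inl j) (Sum.inl j) := by
      have h := congrFun (congrFun hFzval (Sum.inl j)) (Sum.inl j)
      rw [show mz Fz (Sum.inl j) (Sum.inl j) = ((Fz (Sum.inl j) (Sum.inl j) : ℤ) : ℝ) from rfl]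
        at h
      rw [h]; simp [Matrix.smul_apply, smul_eq_mul]
    have h3 : (((Rr * Mz.adjugate * Rrᵀ) j j : ℤ) : ℝ) = k * (P'' * M⁻¹ * P''ᵀ) j j := by
      rw [hPPint]
      show _ = k * (k⁻¹ • mz (Rr * Mz.adjugate * Rrᵀ)) j j
      rw [Matrix.smul_apply, smul_eq_mul, ← mul_assoc, mul_inv_cancel₀ hkpos.ne', one_mul]
      rfl
    push_cast
    rw [h2, h3, hB₁diag_eq j, hk]
    rw [show (Mz.map fun x => (x:ℝ)).det = (Mz.det:ℝ) from mz_det Mz]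
    ring
  have hB₁low : ∀ j : Fin t, k⁻¹ ≤ B₁ j j := by
    intro j
    obtain ⟨z, hz⟩ := hint j
    have hpos : 0 < B₁ j j := posDef_diag_pos hB₁pd j
    have hzpos : (0:ℝ) < (z:ℝ) := by rw [hz]; exact mul_pos hkpos hpos
    have hz1 : (1:ℤ) ≤ z := by exact_mod_cast hzpos
    have hz1' : (1:ℝ) ≤ (z:ℝ) := by exact_mod_cast hz1
    rw [hz] at hz1'
    rw [inv_le_iff_one_le_mul₀ hkpos]
    linarith
  have hB₁diag_up : ∀ i : Fin t, B₁ i i ≤ redC t * N₁.det * k^(t-1) := by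
    intro i
    have hprod : B₁ i i * (k⁻¹)^(t-1) ≤ redC t * N₁.det := by
      have h1 : (k⁻¹)^(t-1) ≤ ∏ j ∈ Finset.univ.erase i, B₁ j j := by
        have hcard : (Finset.univ.erase i).card = t - 1 := by
          rw [Finset.card_erase_of_mem (Finset.mem_univ i), Finset.card_univ, Fintype.card_fin]
        calc (k⁻¹)^(t-1) = ∏ _j ∈ Finset.univ.erase i, k⁻¹ := by
              rw [Finset.prod_const, hcard]
          _ ≤ ∏ j ∈ Finset.univ.erase i, B₁ j j :=
              Finset.prod_le_prod (fun _ _ => inv_nonneg.mpr hkpos.le) (fun j _ => hB₁low j)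
      have h2 : B₁ i i * ∏ j ∈ Finset.univ.erase i, B₁ j j = ∏ j, B₁ j j :=
        Finset.mul_prod_erase Finset.univ (fun j => B₁ j j) (Finset.mem_univ i)
      have h3 : B₁ i i * (k⁻¹)^(t-1) ≤ B₁ i i * ∏ j ∈ Finset.univ.erase i, B₁ j j :=
        mul_le_mul_of_nonneg_left h1 (posDef_diag_pos hB₁pd i).le
      calc B₁ i i * (k⁻¹)^(t-1) ≤ ∏ j, B₁ j j := by rw [← h2]; exact h3
        _ ≤ redC t * N₁.det := hUprod
    have hkt : (0:ℝ) < k^(t-1) := pow_pos hkpos _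
    have := mul_le_mul_of_nonneg_right hprod hkt.le
    rw [mul_assoc, ← mul_pow, inv_mul_cancel₀ hkpos.ne', one_pow, mul_one] at this
    exact this
  have hc₁N : redC t * N₁.det * k^(t-1) = redC t * k^(t-1) / M.det * N.det := by
    rw [hdetN]
    field_simp
  have hB₁entry : ∀ i j, |B₁ i j| ≤ redC t * k^(t-1) / M.det * N.det := by
    intro i j
    calc |B₁ i j| ≤ max (B₁ i i) (B₁ j j) := posDef_entry_le hB₁pd i j
      _ ≤ redC t * N₁.det * k^(t-1) := max_le (hB₁diag_up i) (hB₁diag_up j)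
      _ = _ := hc₁N
  have hP''abs : ∀ i a, |P'' i a| ≤ cR := by
    intro i a
    rw [hP'', Matrix.smul_apply, smul_eq_mul, abs_mul]
    have := hboxed i a
    rw [abs_of_pos (by norm_num : (0:ℝ) < 1/2)]
    nlinarith [abs_nonneg (mz Rr i a)]
  have hPPbound : ∀ i j, |(P'' * M⁻¹ * P''ᵀ) i j| ≤ c₃ := by
    intro i j
    rw [Matrix.mul_apply]
    refine le_trans (Finset.abs_sum_le_sum_abs _ _) ?_
    have hterm : ∀ bb, |(P'' * M⁻¹) i bb * P''ᵀ bb j| ≤ (∑ a, |M⁻¹ a bb|) * cR^2 := by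
      intro bb
      rw [abs_mul, Matrix.transpose_apply]
      have hin : |(P'' * M⁻¹) i bb| ≤ (∑ a, |M⁻¹ a bb|) * cR := by
        rw [Matrix.mul_apply]
        refine le_trans (Finset.abs_sum_le_sum_abs _ _) ?_
        rw [Finset.sum_mul]
        refine Finset.sum_le_sum fun a _ => ?_
        rw [abs_mul]
        have h1 := hP''abs i a
        have h2 : (0:ℝ) ≤ |M⁻¹ a bb| := abs_nonneg _
        nlinarith [abs_nonneg (P'' i a)]
      have h3 := hP''abs j bb
      have h4 : (0:ℝ) ≤ (∑ a, |M⁻¹ a bb|) * cR :=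
        mul_nonneg (Finset.sum_nonneg fun _ _ => abs_nonneg _) hcRnn
      calc |(P'' * M⁻¹) i bb| * |P'' j bb| ≤ ((∑ a, |M⁻¹ a bb|) * cR) * cR :=
            mul_le_mul hin h3 (abs_nonneg _) h4
        _ = (∑ a, |M⁻¹ a bb|) * cR^2 := by ring
    refine le_trans (Finset.sum_le_sum fun bb _ => hterm bb) ?_
    apply le_of_eq
    rw [hc₃, hcMinv, ← Finset.sum_mul, Finset.sum_comm]
    ring
  have hMentry : ∀ i j, |M i j| ≤ cMabs := by
    intro i j
    rw [hcMabs]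
    calc |M i j| ≤ ∑ bb, |M i bb| :=
          Finset.single_le_sum (f := fun bb => |M i bb|) (fun _ _ => abs_nonneg _)
            (Finset.mem_univ j)
      _ ≤ ∑ a, ∑ bb, |M a bb| :=
          Finset.single_le_sum (f := fun a => ∑ bb, |M a bb|)
            (fun _ _ => Finset.sum_nonneg fun _ _ => abs_nonneg _) (Finset.mem_univ i)
  have hc₁detnn : (0:ℝ) ≤ redC t * k^(t-1) / M.det * N.det :=
    mul_nonneg hc₁nn hNdetpos.le
  refine ⟨γ, hγBtr, ?_⟩
  intro p q
  rw [← hF]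
  cases p with
  | inl i =>
    cases q with
    | inl j =>
      have heq : F (Sum.inl i) (Sum.inl j) = B₁ i j + (P'' * M⁻¹ * P''ᵀ) i j := by
        rw [hFblocks]
        show (B₁ + P'' * M⁻¹ * P''ᵀ) i j = _
        rw [Matrix.add_apply]
      rw [heq]
      calc |B₁ i j + (P'' * M⁻¹ * P''ᵀ) i j|
          ≤ |B₁ i j| + |(P'' * M⁻¹ * P''ᵀ) i j| := abs_add_le _ _
        _ ≤ redC t * k^(t-1) / M.det * N.det + c₃ :=
            add_le_add (hB₁entry i j) (hPPbound i j)
        _ ≤ redC t * k^(t-1) / M.det * N.det + (c₃ + cR + cMabs) := by linarith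
    | inr j =>
      have heq : F (Sum.inl i) (Sum.inr j) = P'' i j := by rw [hFblocks]; rfl
      rw [heq]
      have := hP''abs i j
      linarith
  | inr i =>
    cases q with
    | inl j =>
      have heq : F (Sum.inr i) (Sum.inl j) = P'' j i := by rw [hFblocks]; rfl
      rw [heq]
      have := hP''abs j i
      linarith
    | inr j =>
      have heq : F (Sum.inr i) (Sum.inr j) = M i j := by rw [hFblocks]; rfl
      rw [heq]
      have := hMentry i j
      linarith

lemma mz_one {a : Type*} [Fintype a] [DecidableEq a] : mz (1 : Matrix a a ℤ) = 1 := by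
  ext i j
  simp [mz, Matrix.one_apply, apply_ite]

lemma mz_zero {a b : Type*} : mz (0 : Matrix a b ℤ) = 0 := by
  ext i j
  simp [mz]

lemma mz_inj {a b : Type*} {A B : Matrix a b ℤ} (h : mz A = mz B) : A = B := by
  ext i j
  have h2 := congrFun (congrFun h i) j
  simp only [mz_apply] at h2
  exact_mod_cast h2

lemma int_of_rep {a b : Type*} (Az : Matrix a b ℤ) : IsIntegerMatrix (mz Az) :=
  fun i j => ⟨Az i j, rfl⟩

lemma int_mul {a b c : Type*} [Fintype b] {A : Matrix a b ℝ} {B : Matrix b c ℝ}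
    (hA : IsIntegerMatrix A) (hB : IsIntegerMatrix B) : IsIntegerMatrix (A * B) := by
  obtain ⟨Az, hAz⟩ := int_rep hA
  obtain ⟨Bz, hBz⟩ := int_rep hB
  rw [← hAz, ← hBz, ← mz_mul]
  exact int_of_rep _

lemma int_add {a b : Type*} {A B : Matrix a b ℝ}
    (hA : IsIntegerMatrix A) (hB : IsIntegerMatrix B) : IsIntegerMatrix (A + B) := by
  obtain ⟨Az, hAz⟩ := int_rep hA
  obtain ⟨Bz, hBz⟩ := int_rep hB
  rw [← hAz, ← hBz, ← mz_add]
  exact int_of_rep _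

lemma int_neg {a b : Type*} {A : Matrix a b ℝ} (hA : IsIntegerMatrix A) :
    IsIntegerMatrix (-A) := by
  intro i j
  obtain ⟨z, hz⟩ := hA i j
  exact ⟨-z, by rw [Matrix.neg_apply, hz]; push_cast; ring⟩

lemma btr_rep {t r : ℕ} {γ : Matrix (Fin t ⊕ Fin r) (Fin t ⊕ Fin r) ℝ}
    (hγ : InBtr t r γ) : ∃ Γz : Matrix (Fin t ⊕ Fin r) (Fin t ⊕ Fin r) ℤ, mz Γz = γ := by
  obtain ⟨γ₁, γ₂, hi1, hdet, hi2, rfl⟩ := hγ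
  obtain ⟨G₁, hG₁⟩ := int_rep hi1
  obtain ⟨G₂, hG₂⟩ := int_rep hi2
  refine ⟨Matrix.fromBlocks G₁ G₂ 0 1, ?_⟩
  rw [mz, Matrix.fromBlocks_map]
  show Matrix.fromBlocks (mz G₁) (mz G₂) (mz 0) (mz 1) = _
  rw [hG₁, hG₂, mz_zero, mz_one]

lemma btr_mul {t r : ℕ} {γ δ : Matrix (Fin t ⊕ Fin r) (Fin t ⊕ Fin r) ℝ}
    (hγ : InBtr t r γ) (hδ : InBtr t r δ) : InBtr t r (γ * δ) := by
  obtain ⟨γ₁, γ₂, hi1, hd1, hi2, rfl⟩ := hγ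
  obtain ⟨δ₁, δ₂, hj1, hd2, hj2, rfl⟩ := hδ
  refine ⟨γ₁ * δ₁, γ₁ * δ₂ + γ₂, int_mul hi1 hj1, ?_, int_add (int_mul hi1 hj2) hi2, ?_⟩
  · rw [Matrix.det_mul]
    rcases hd1 with h1 | h1 <;> rcases hd2 with h2 | h2 <;> rw [h1, h2] <;> norm_num
  · rw [Matrix.fromBlocks_multiply]
    refine Matrix.fromBlocks_inj.mpr ⟨by simp, by simp, by simp, by simp⟩

lemma btr_inverse {t r : ℕ} {γ : Matrix (Fin t ⊕ Fin r) (Fin t ⊕ Fin r) ℝ}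
    (hγ : InBtr t r γ) : ∃ δ, InBtr t r δ ∧ δ * γ = 1 ∧ γ * δ = 1 := by
  obtain ⟨γ₁, γ₂, hi1, hdet, hi2, rfl⟩ := hγ
  obtain ⟨G₁, hG₁⟩ := int_rep hi1
  have hcast : ((G₁.det : ℤ) : ℝ) = γ₁.det := by rw [← mz_det, hG₁]
  have hG₁det : G₁.det = 1 ∨ G₁.det = -1 := by
    rcases hdet with h | h
    · left; exact_mod_cast hcast.trans h
    · right
      have : ((G₁.det : ℤ):ℝ) = ((-1 : ℤ) : ℝ) := by rw [hcast, h]; norm_num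
      exact_mod_cast this
  have hd2 : G₁.det * G₁.det = 1 := by rcases hG₁det with h | h <;> rw [h] <;> norm_num
  set η₁z := G₁.det • G₁.adjugate with hη
  have hmulz : G₁ * η₁z = 1 := by
    rw [hη, Matrix.mul_smul, Matrix.mul_adjugate, smul_smul, hd2, one_smul]
  have hmulz' : η₁z * G₁ = 1 := by
    rw [hη, Matrix.smul_mul, Matrix.adjugate_mul, smul_smul, hd2, one_smul]
  set η₁ := mz η₁z with hη₁
  have hγ₁η : γ₁ * η₁ = 1 := by rw [hη₁, ← hG₁, ← mz_mul, hmulz, mz_one]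
  have hηγ₁ : η₁ * γ₁ = 1 := by rw [hη₁, ← hG₁, ← mz_mul, hmulz', mz_one]
  have hη₁det : η₁.det = 1 ∨ η₁.det = -1 := by
    have h1 : η₁.det * γ₁.det = 1 := by
      rw [← Matrix.det_mul, hηγ₁, Matrix.det_one]
    rcases hdet with h | h
    · left; rw [h, mul_one] at h1; exact h1
    · right; rw [h] at h1; linarith
  refine ⟨Matrix.fromBlocks η₁ (-(η₁ * γ₂)) 0 1,
    ⟨η₁, -(η₁ * γ₂), fun i j => ⟨η₁z i j, rfl⟩, hη₁det,
      int_neg (int_mul (fun i j => ⟨η₁z i j, rfl⟩) hi2), rfl⟩, ?_, ?_⟩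
  · rw [Matrix.fromBlocks_multiply, ← Matrix.fromBlocks_one]
    refine Matrix.fromBlocks_inj.mpr ⟨by simp [hηγ₁], by simp, by simp, by simp⟩
  · rw [Matrix.fromBlocks_multiply, ← Matrix.fromBlocks_one]
    refine Matrix.fromBlocks_inj.mpr
      ⟨by simp [hγ₁η], ?_, by simp, by simp⟩
    rw [Matrix.mul_one, Matrix.mul_neg, ← Matrix.mul_assoc, hγ₁η, Matrix.one_mul]
    simp

lemma exists_btr_of_conj_eq {t r : ℕ}
    {γ γ' N N' : Matrix (Fin t ⊕ Fin r) (Fin t ⊕ Fin r) ℝ}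
    (hγ : InBtr t r γ) (hγ' : InBtr t r γ')
    (h : γ * N * γᵀ = γ' * N' * γ'ᵀ) : ∃ δ, InBtr t r δ ∧ δ * N * δᵀ = N' := by
  obtain ⟨δ', hδ'Btr, hδ'γ', hγ'δ'⟩ := btr_inverse hγ'
  refine ⟨δ' * γ, btr_mul hδ'Btr hγ, ?_⟩
  have hT : (δ' * γ)ᵀ = γᵀ * δ'ᵀ := Matrix.transpose_mul _ _
  have hδ'T : γ'ᵀ * δ'ᵀ = 1 := by
    rw [← Matrix.transpose_mul, hδ'γ', Matrix.transpose_one]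
  calc (δ' * γ) * N * (δ' * γ)ᵀ = δ' * (γ * N * γᵀ) * δ'ᵀ := by
        rw [hT]; simp only [Matrix.mul_assoc]
    _ = δ' * (γ' * N' * γ'ᵀ) * δ'ᵀ := by rw [h]
    _ = (δ' * γ') * N' * (γ'ᵀ * δ'ᵀ) := by simp only [Matrix.mul_assoc]
    _ = N' := by rw [hδ'γ', hδ'T, Matrix.one_mul, Matrix.mul_one]

end KM

set_option maxHeartbeats 1000000 in
/-- convergence of the Koecher–Maass type series over a set of
`B_{t,r}(ℤ)`-orbit representatives in `L_{t,r}^+(M)`: for sufficiently large real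
`s` the family `(det N)^{-s}` is summable. -/
theorem summable_det_rpow_neg_orbitReps {t r : ℕ} (ht : 1 ≤ t)
    (M : Matrix (Fin r) (Fin r) ℝ) (hM : LPlus M) :
    ∃ s₀ : ℝ, ∀ s : ℝ, s₀ ≤ s →
      ∀ S : Set (Matrix (Fin t ⊕ Fin r) (Fin t ⊕ Fin r) ℝ),
        S ⊆ LtrPlus t r M →
        (∀ N ∈ S, ∀ N' ∈ S, N ≠ N' → ∀ γ, InBtr t r γ → γ * N * γᵀ ≠ N') →
        Summable fun N : S => (N : Matrix (Fin t ⊕ Fin r) (Fin t ⊕ Fin r) ℝ).det ^ (-s) := by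
  classical
  obtain ⟨c₁, c₂, hc₁, hc₂, hred⟩ := KM.reduce_in_orbit t r M hM
  set n : ℕ := t + r with hn
  set nn : ℕ := n * n with hnn
  refine ⟨(nn : ℝ) + 2, ?_⟩
  intro s hs S hSsub hSrep
  have hspos : 0 < s := by
    have : (0:ℝ) ≤ (nn:ℝ) := Nat.cast_nonneg _
    linarith
  have hmem : ∀ N : S, (N : Matrix (Fin t ⊕ Fin r) (Fin t ⊕ Fin r) ℝ) ∈ LtrPlus t r M :=
    fun N => hSsub N.2
  have hLP : ∀ N : S, LPlus (N : Matrix (Fin t ⊕ Fin r) (Fin t ⊕ Fin r) ℝ) := by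
    intro N
    obtain ⟨_, _, _, _, _, h⟩ := hmem N
    exact h
  have hdetpos : ∀ N : S, 0 < ((N : Matrix (Fin t ⊕ Fin r) (Fin t ⊕ Fin r) ℝ)).det :=
    fun N => (hLP N).2.1.det_pos
  choose γf hγBtr hγbd using fun N : S => hred _ (hmem N)
  choose Nzf hNzf using fun N : S => KM.half_rep (hLP N).2.2
  choose Γzf hΓzf using fun N : S => KM.btr_rep (hγBtr N)
  set dZ : S → ℤ := fun N => (Nzf N).det with hdZ
  have hcard : Fintype.card (Fin t ⊕ Fin r) = n := by
    rw [Fintype.card_sum, Fintype.card_fin, Fintype.card_fin]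
  have hdZval : ∀ N : S,
      ((dZ N : ℤ) : ℝ) = 2^n * ((N : Matrix (Fin t ⊕ Fin r) (Fin t ⊕ Fin r) ℝ)).det := by
    intro N
    have h2 := KM.mz_det (Nzf N)
    rw [hNzf N, Matrix.det_smul, hcard] at h2
    exact h2.symm
  have hdZpos : ∀ N : S, 1 ≤ dZ N := by
    intro N
    have h1 : (0:ℝ) < ((dZ N : ℤ):ℝ) := by
      rw [hdZval N]
      exact mul_pos (by positivity) (hdetpos N)
    have : (0:ℤ) < dZ N := by exact_mod_cast h1
    omega
  set mf : S → ℕ := fun N => (dZ N).toNat with hmf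
  have hmf1 : ∀ N : S, 1 ≤ mf N := by
    intro N
    have := hdZpos N
    simp only [hmf]
    omega
  have hmfval : ∀ N : S,
      ((mf N : ℕ) : ℝ) = 2^n * ((N : Matrix (Fin t ⊕ Fin r) (Fin t ⊕ Fin r) ℝ)).det := by
    intro N
    have h0 : ((dZ N).toNat : ℤ) = dZ N := Int.toNat_of_nonneg (by linarith [hdZpos N])
    have h1 : ((mf N : ℕ) : ℝ) = ((dZ N : ℤ) : ℝ) := by
      rw [hmf]
      exact_mod_cast congrArg (fun z : ℤ => (z : ℝ)) h0
    rw [h1, hdZval N]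
  have hdetval : ∀ N : S,
      ((N : Matrix (Fin t ⊕ Fin r) (Fin t ⊕ Fin r) ℝ)).det = (mf N : ℝ) / 2^n := by
    intro N
    rw [hmfval N]
    field_simp
  set Φ : S → Matrix (Fin t ⊕ Fin r) (Fin t ⊕ Fin r) ℤ :=
    fun N => Γzf N * Nzf N * (Γzf N)ᵀ with hΦ
  have hΦval : ∀ N : S, KM.mz (Φ N)
      = (2:ℝ) • (γf N * (N : Matrix (Fin t ⊕ Fin r) (Fin t ⊕ Fin r) ℝ) * (γf N)ᵀ) := by
    intro N
    rw [hΦ]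
    show KM.mz (Γzf N * Nzf N * (Γzf N)ᵀ) = _
    rw [KM.mz_mul, KM.mz_mul, KM.mz_transpose, hΓzf, hNzf, Matrix.mul_smul, Matrix.smul_mul]
  have hΦinj : Function.Injective Φ := by
    intro N N' h
    have h1 : KM.mz (Φ N) = KM.mz (Φ N') := by rw [h]
    rw [hΦval N, hΦval N'] at h1
    have h2 : γf N * (N : Matrix (Fin t ⊕ Fin r) (Fin t ⊕ Fin r) ℝ) * (γf N)ᵀ
        = γf N' * (N' : Matrix (Fin t ⊕ Fin r) (Fin t ⊕ Fin r) ℝ) * (γf N')ᵀ := by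
      have h3 := congrArg (fun X => (2:ℝ)⁻¹ • X) h1
      simpa [smul_smul] using h3
    by_contra hne
    have hne' : (N : Matrix (Fin t ⊕ Fin r) (Fin t ⊕ Fin r) ℝ) ≠ N' := fun hc => hne (Subtype.ext hc)
    obtain ⟨δ, hδBtr, hδeq⟩ := KM.exists_btr_of_conj_eq (hγBtr N) (hγBtr N') h2
    exact hSrep _ N.2 _ N'.2 hne' δ hδBtr hδeq
  set bnd : ℕ → ℤ := fun m => ⌈2*c₁*((m:ℝ)/2^n) + 2*c₂⌉ with hbnd
  have hbndnn : ∀ m, (0:ℤ) ≤ bnd m := by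
    intro m
    rw [hbnd]
    apply Int.ceil_nonneg
    positivity
  have hΦbd : ∀ (N : S) a b, |Φ N a b| ≤ bnd (mf N) := by
    intro N a b
    have h1 : ((Φ N a b : ℤ) : ℝ)
        = 2 * (γf N * (N : Matrix (Fin t ⊕ Fin r) (Fin t ⊕ Fin r) ℝ) * (γf N)ᵀ) a b := by
      have h := congrFun (congrFun (hΦval N) a) b
      simpa [KM.mz_apply, Matrix.smul_apply, smul_eq_mul] using h
    have h2 : |((Φ N a b : ℤ) : ℝ)| ≤ 2*c₁*((mf N : ℝ)/2^n) + 2*c₂ := by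
      rw [h1, abs_mul, abs_of_pos (by norm_num : (0:ℝ) < 2), ← hdetval N]
      have h3 := hγbd N a b
      linarith
    have h3 : ((|Φ N a b| : ℤ) : ℝ) ≤ ((bnd (mf N) : ℤ) : ℝ) := by
      rw [Int.cast_abs]
      exact le_trans h2 (Int.le_ceil _)
    exact_mod_cast h3
  set val : ℕ → ℝ := fun m => ((m:ℝ)/2^n) ^ (-s) with hval
  have hvalnn : ∀ m, 0 ≤ val m := fun m => Real.rpow_nonneg (by positivity) _
  set h : ℕ × (Matrix (Fin t ⊕ Fin r) (Fin t ⊕ Fin r) ℤ) → ℝ := fun p =>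
    if (1 ≤ p.1 ∧ ∀ a b, |p.2 a b| ≤ bnd p.1) then val p.1 else 0 with hh
  have hhnn : ∀ p, 0 ≤ h p := by
    intro p
    rw [hh]
    dsimp only
    split
    · exact hvalnn _
    · exact le_refl _
  set ψ : S → ℕ × (Matrix (Fin t ⊕ Fin r) (Fin t ⊕ Fin r) ℤ) := fun N => (mf N, Φ N) with hψ
  have hψinj : Function.Injective ψ := by
    intro N N' hEq
    exact hΦinj (congrArg Prod.snd hEq)
  have hfh : ∀ N : S, ((N : Matrix (Fin t ⊕ Fin r) (Fin t ⊕ Fin r) ℝ)).det ^ (-s) = h (ψ N) := by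
    intro N
    rw [hh, hψ]
    dsimp only
    rw [if_pos ⟨hmf1 N, fun a b => hΦbd N a b⟩]
    rw [hval, hdetval N]
  set Gm : ℕ → Finset (Matrix (Fin t ⊕ Fin r) (Fin t ⊕ Fin r) ℤ) := fun m =>
    Fintype.piFinset fun _ : Fin t ⊕ Fin r =>
      Fintype.piFinset fun _ : Fin t ⊕ Fin r => Finset.Icc (-(bnd m)) (bnd m) with hGm
  have hGmmem : ∀ m (Z : Matrix (Fin t ⊕ Fin r) (Fin t ⊕ Fin r) ℤ),
      (∀ a b, |Z a b| ≤ bnd m) → Z ∈ Gm m := by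
    intro m Z hZ
    rw [hGm]; refine Fintype.mem_piFinset.mpr ?_
    intro a
    rw [Fintype.mem_piFinset]
    intro b
    rw [Finset.mem_Icc]
    have h4 := abs_le.mp (hZ a b)
    exact ⟨h4.1, h4.2⟩
  have hslice0 : ∀ m Z, Z ∉ Gm m → h (m, Z) = 0 := by
    intro m Z hZ
    rw [hh]
    dsimp only
    rw [if_neg]
    intro hcon
    exact hZ (hGmmem m Z hcon.2)
  have hsliceSummable : ∀ m, Summable fun Z : Matrix (Fin t ⊕ Fin r) (Fin t ⊕ Fin r) ℤ =>
      h (m, Z) := fun m => summable_of_ne_finset_zero (s := Gm m) (hslice0 m)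
  have hslice_tsum : ∀ m, ∑' Z, h (m, Z) ≤ ((Gm m).card : ℝ) * val m := by
    intro m
    rw [tsum_eq_sum (hslice0 m)]
    have hle : ∀ Z ∈ Gm m, h (m, Z) ≤ val m := by
      intro Z _
      rw [hh]
      dsimp only
      split
      · exact le_refl _
      · exact hvalnn m
    calc ∑ Z ∈ Gm m, h (m, Z) ≤ ∑ _Z ∈ Gm m, val m := Finset.sum_le_sum hle
      _ = ((Gm m).card : ℝ) * val m := by rw [Finset.sum_const, nsmul_eq_mul]
  have hcardGm : ∀ m, ((Gm m).card : ℝ) ≤ (2*(bnd m : ℝ) + 1)^nn := by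
    intro m
    have h2 : ∀ a : Fin t ⊕ Fin r, (Fintype.piFinset fun _ : Fin t ⊕ Fin r =>
        Finset.Icc (-(bnd m)) (bnd m)).card = (Finset.Icc (-(bnd m)) (bnd m)).card ^ n := by
      intro a
      rw [Fintype.card_piFinset, Finset.prod_const, Finset.card_univ, hcard]
    have h1 : (Gm m).card = (Finset.Icc (-(bnd m)) (bnd m)).card ^ nn := by
      rw [hGm]
      show (Fintype.piFinset fun _ : Fin t ⊕ Fin r =>
        Fintype.piFinset fun _ : Fin t ⊕ Fin r => Finset.Icc (-(bnd m)) (bnd m)).card = _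
      rw [Fintype.card_piFinset, Finset.prod_congr rfl (fun a _ => h2 a), Finset.prod_const,
        Finset.card_univ, hcard, ← pow_mul, hnn]
    have hIcc : ((Finset.Icc (-(bnd m)) (bnd m)).card : ℝ) = 2*(bnd m:ℝ)+1 := by
      rw [Int.card_Icc]
      have hb := hbndnn m
      have h5 : ((bnd m + 1 - -(bnd m)).toNat : ℤ) = 2 * bnd m + 1 := by
        rw [Int.toNat_of_nonneg (by omega)]
        ring
      have h6 : (((bnd m + 1 - -(bnd m)).toNat : ℤ) : ℝ) = ((2 * bnd m + 1 : ℤ) : ℝ) := by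
        exact_mod_cast congrArg (fun z : ℤ => (z:ℝ)) h5
      push_cast at h6 ⊢
      linarith
    rw [h1]
    push_cast
    rw [hIcc]
  set a0 : ℝ := 4*c₁ + 4*c₂ + 3 with ha0
  have ha0pos : 0 < a0 := by rw [ha0]; linarith
  have hbnd_le : ∀ m : ℕ, 1 ≤ m → 2*(bnd m : ℝ) + 1 ≤ a0 * m := by
    intro m hm
    have h1 : (bnd m : ℝ) ≤ 2*c₁*((m:ℝ)/2^n) + 2*c₂ + 1 := by
      rw [hbnd]
      have := Int.ceil_lt_add_one (2*c₁*((m:ℝ)/2^n) + 2*c₂)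
      linarith
    have hm1 : (1:ℝ) ≤ (m:ℝ) := by exact_mod_cast hm
    have h2n : (1:ℝ) ≤ 2^n := one_le_pow₀ (by norm_num)
    have hdiv : ((m:ℝ)/2^n) ≤ (m:ℝ) := by
      apply div_le_self (by positivity) h2n
    have h2 : (bnd m : ℝ) ≤ 2*c₁*(m:ℝ) + 2*c₂ + 1 := by
      have h3 : 2*c₁*((m:ℝ)/2^n) ≤ 2*c₁*(m:ℝ) :=
        mul_le_mul_of_nonneg_left hdiv (by linarith)
      linarith
    rw [ha0]
    nlinarith
  set CC : ℝ := a0^nn * ((2:ℝ)^n)^s with hCC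
  have hCCnn : 0 ≤ CC := by
    rw [hCC]
    apply mul_nonneg (pow_nonneg ha0pos.le _)
    exact Real.rpow_nonneg (by positivity) _
  set MM : ℕ → ℝ := fun m => CC * (m:ℝ)^((nn:ℝ) - s) with hMM
  have hMMsummable : Summable MM := by
    rw [hMM]
    apply Summable.mul_left
    apply Real.summable_nat_rpow.mpr
    linarith
  have hvaldecomp : ∀ m : ℕ, 1 ≤ m → val m = (m:ℝ)^(-s) * ((2:ℝ)^n)^s := by
    intro m hm
    simp only [hval]
    rw [div_eq_mul_inv, Real.mul_rpow (by positivity) (by positivity),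
      Real.inv_rpow (by positivity), Real.rpow_neg (by positivity : (0:ℝ) ≤ (2:ℝ)^n), inv_inv]
  have hTle : ∀ m : ℕ, (∑' Z, h (m, Z)) ≤ MM m := by
    intro m
    rcases Nat.eq_zero_or_pos m with hm0 | hm1
    · subst hm0
      have hz : ∀ Z, h (0, Z) = 0 := by
        intro Z
        rw [hh]
        dsimp only
        rw [if_neg]
        intro hcon
        omega
      rw [tsum_congr hz, tsum_zero]
      simp only [hMM]
      have h9 : ((0:ℕ):ℝ)^((nn:ℝ) - s) = 0 := by
        rw [Nat.cast_zero, Real.zero_rpow]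
        intro hcon
        have : (nn:ℝ) = s := by linarith
        linarith
      rw [h9, mul_zero]
    · have hstep1 := hslice_tsum m
      have hstep2 : ((Gm m).card : ℝ) * val m ≤ (a0*m)^nn * val m := by
        apply mul_le_mul_of_nonneg_right _ (hvalnn m)
        calc ((Gm m).card : ℝ) ≤ (2*(bnd m : ℝ) + 1)^nn := hcardGm m
          _ ≤ (a0*m)^nn := by
              apply pow_le_pow_left₀ _ (hbnd_le m hm1)
              have := hbndnn m
              have : (0:ℝ) ≤ (bnd m : ℝ) := by exact_mod_cast this
              linarith
      have hmpos : (0:ℝ) < (m:ℝ) := by exact_mod_cast hm1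
      have hstep3 : (a0*m)^nn * val m = MM m := by
        rw [hvaldecomp m hm1]
        simp only [hMM, hCC]
        rw [mul_pow]
        have h4 : ((m:ℝ))^nn = (m:ℝ)^((nn:ℕ):ℝ) := (Real.rpow_natCast _ _).symm
        rw [h4, sub_eq_add_neg, Real.rpow_add hmpos]
        ring
      calc (∑' Z, h (m, Z)) ≤ ((Gm m).card : ℝ) * val m := hstep1
        _ ≤ (a0*m)^nn * val m := hstep2
        _ = MM m := hstep3
  have hhsummable : Summable h := by
    rw [hh]
    apply (summable_prod_of_nonneg ?_).mpr
    constructor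
    · intro m
      exact hsliceSummable m
    · apply Summable.of_nonneg_of_le ?_ hTle hMMsummable
      · intro m
        exact tsum_nonneg fun Z => hhnn (m, Z)
    · intro p
      exact hhnn p
  have hcomp : Summable (h ∘ ψ) := hhsummable.comp_injective hψinj
  apply Summable.congr hcomp
  intro N
  exact (hfh N).symm
end
end
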